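/- For each n ∈ ℕ let (Xₙ, dₙ) be a path connected metric space with basepoint xₙ and diameter at most 2^{-n}. Let the shrinking wedge W := ⋁ˢ_{n∈ℕ}(Xₙ, xₙ) be the metric space obtained from the disjoint union of the Xₙ by identifying all basepoints xₙ to a single point w, with metric d(y,z) = dₙ(y,z) if y,z both lie in Xₙ, and d(y,z) = dₙ(y,xₙ) + dₘ(z,xₘ) if y ∈ Xₙ∖{xₙ} and z ∈ Xₘ∖{xₘ} with m ≠ n. Then the strong abelianization ĥ(W, w) is isomorphic as a group to the product ∏_{n∈ℕ} ĥ(Xₙ, xₙ). -/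

import Mathlib

open CategoryTheory
open scoped Cardinal

attribute [local instance] Path.Homotopic.setoid

/-- The path-homotopy class of a loop `l` based at `x`, as an element of the
fundamental group `π₁(X, x)`. -/
noncomputable def pathClass {X : Type u} [TopologicalSpace X] {x : X} (l : Path x x) :
    FundamentalGroup X x :=
  FundamentalGroup.fromPath (⟦l⟧ : Path.Homotopic.Quotient x x)

/-- The loop set of a subgroup `G` of `π₁(Y, y)`: the set of loops at `y` (elements of the
loop space `Path y y`, carrying the compact-open/uniform convergence topology) whose
path-homotopy class lies in `G`. -/
def loopSet {Y : Type u} [TopologicalSpace Y] {y : Y} (G : Subgroup (FundamentalGroup Y y)) :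
    Set (Path y y) :=
  {l | pathClass l ∈ G}

/-- The smallest closed subgroup of `π₁(Y, y)` containing the commutator subgroup,
namely the intersection of all subgroups that contain the commutator subgroup and
whose loop set is closed in the loop space. -/
noncomputable def strongCommutator (Y : Type u) [TopologicalSpace Y] (y : Y) :
    Subgroup (FundamentalGroup Y y) :=
  ⨅ (H : Subgroup (FundamentalGroup Y y))
    (_ : commutator (FundamentalGroup Y y) ≤ H ∧ IsClosed (loopSet H)), H

theorem commutator_le_strongCommutator (Y : Type u) [TopologicalSpace Y] (y : Y) :
    commutator (FundamentalGroup Y y) ≤ strongCommutator Y y :=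
  le_iInf fun _ => le_iInf fun h => h.1

open scoped commutatorElement in
instance strongCommutator_normal (Y : Type u) [TopologicalSpace Y] (y : Y) :
    (strongCommutator Y y).Normal := by
  constructor
  intro g hg a
  have h1 : ⁅a, g⁆ ∈ strongCommutator Y y := by
    apply commutator_le_strongCommutator Y y
    rw [commutator_def]
    exact Subgroup.commutator_mem_commutator (Subgroup.mem_top a) (Subgroup.mem_top g)
  have h2 : a * g * a⁻¹ = ⁅a, g⁆ * g := by group
  rw [h2]; exact Subgroup.mul_mem _ h1 hg

/-- The strong abelianization `ĥ(Y, y)`: the quotient of `π₁(Y, y)` by the smallest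
closed subgroup containing the commutator subgroup. -/
noncomputable abbrev StrongAb (Y : Type u) [TopologicalSpace Y] (y : Y) : Type u :=
  FundamentalGroup Y y ⧸ strongCommutator Y y

namespace Stmt18Aux

open CategoryTheory unitInterval

variable {Y : Type*} [TopologicalSpace Y] {Z : Type*} [TopologicalSpace Z] {y : Y} {z : Z}

/-- push a loop forward along a pointed continuous map -/
def loopMap (f : Y → Z) (hf : Continuous f) (hfy : f y = z) (l : Path y y) : Path z z where
  toFun := f ∘ l
  continuous_toFun := hf.comp l.continuous
  source' := by simp [hfy]
  target' := by simp [hfy]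

@[simp] theorem loopMap_apply (f : Y → Z) (hf : Continuous f) (hfy : f y = z) (l : Path y y)
    (t : I) : loopMap f hf hfy l t = f (l t) := rfl

theorem loopMap_homotopic (f : Y → Z) (hf : Continuous f) (hfy : f y = z) {l l' : Path y y}
    (h : l.Homotopic l') : (loopMap f hf hfy l).Homotopic (loopMap f hf hfy l') := by
  subst hfy
  have h2 : l.map hf |>.Homotopic (l'.map hf) := Path.Homotopic.map h ⟨f, hf⟩
  have e1 : loopMap f hf rfl l = l.map hf := Path.ext rfl
  have e2 : loopMap f hf rfl l' = l'.map hf := Path.ext rfl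
  rw [e1, e2]; exact h2

theorem loopMap_trans (f : Y → Z) (hf : Continuous f) (hfy : f y = z) (p q : Path y y) :
    loopMap f hf hfy (p.trans q) = (loopMap f hf hfy p).trans (loopMap f hf hfy q) := by
  apply Path.ext
  funext t
  show f ((p.trans q) t) = _
  simp only [Path.trans_apply]
  split_ifs <;> rfl

/-- an element of the fundamental group built from a quotient of loops -/
noncomputable def autOfQuot {X : Type*} [TopologicalSpace X] {x : X}
    (p : Path.Homotopic.Quotient x x) : FundamentalGroup X x :=
  FundamentalGroup.fromPath p

@[simp] theorem autOfQuot_hom {X : Type*} [TopologicalSpace X] {x : X}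
    (p : Path.Homotopic.Quotient x x) : FundamentalGroup.toPath (autOfQuot p) = p := rfl

theorem pathClass_eq_autOfQuot {X : Type*} [TopologicalSpace X] {x : X} (l : Path x x) :
    pathClass l = autOfQuot ⟦l⟧ := rfl

/-- the map on loop quotients induced by a pointed continuous map -/
noncomputable def quotMap (f : Y → Z) (hf : Continuous f) (hfy : f y = z)
    (p : Path.Homotopic.Quotient y y) : Path.Homotopic.Quotient z z :=
  Quotient.map (loopMap f hf hfy) (fun _ _ h => loopMap_homotopic f hf hfy h) p

/-- the induced homomorphism on fundamental groups -/
theorem quotMap_comp (f : Y → Z) (hf : Continuous f) (hfy : f y = z)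
    (p q : Path.Homotopic.Quotient y y) :
    quotMap f hf hfy (Path.Homotopic.Quotient.trans p q)
      = Path.Homotopic.Quotient.trans (quotMap f hf hfy p) (quotMap f hf hfy q) := by
  induction p using Quotient.inductionOn with | _ lp => ?_
  induction q using Quotient.inductionOn with | _ lq => ?_
  show (⟦loopMap f hf hfy (lp.trans lq)⟧ : Path.Homotopic.Quotient z z) = _
  rw [loopMap_trans]
  rfl

noncomputable def indHom (f : Y → Z) (hf : Continuous f) (hfy : f y = z) :
    FundamentalGroup Y y →* FundamentalGroup Z z :=
  MonoidHom.mk' (fun g => autOfQuot (quotMap f hf hfy (FundamentalGroup.toPath g))) (by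
    intro a b
    show quotMap f hf hfy (FundamentalGroup.toPath (a * b))
      = Path.Homotopic.Quotient.trans (quotMap f hf hfy (FundamentalGroup.toPath b))
          (quotMap f hf hfy (FundamentalGroup.toPath a))
    have h1 : FundamentalGroup.toPath (a * b) = Path.Homotopic.Quotient.trans
        (FundamentalGroup.toPath b) (FundamentalGroup.toPath a) := rfl
    rw [h1]
    exact quotMap_comp f hf hfy (FundamentalGroup.toPath b) (FundamentalGroup.toPath a))

theorem indHom_pathClass (f : Y → Z) (hf : Continuous f) (hfy : f y = z) (l : Path y y) :
    indHom f hf hfy (pathClass l) = pathClass (loopMap f hf hfy l) := by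
  rfl

theorem pathClass_trans {X : Type*} [TopologicalSpace X] {x : X} (p q : Path x x) :
    pathClass (p.trans q) = pathClass q * pathClass p := by
  show (⟦p.trans q⟧ : Path.Homotopic.Quotient x x)
    = FundamentalGroup.toPath (pathClass q * pathClass p)
  have : FundamentalGroup.toPath (pathClass q * pathClass p)
      = Path.Homotopic.Quotient.trans ⟦p⟧ ⟦q⟧ := rfl
  exact this.symm

theorem pathClass_refl {X : Type*} [TopologicalSpace X] (x : X) :
    pathClass (Path.refl x) = 1 := by
  rfl

theorem pathClass_homotopic {X : Type*} [TopologicalSpace X] {x : X} {p q : Path x x}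
    (h : p.Homotopic q) : pathClass p = pathClass q := by
  exact Quotient.sound h

theorem pathClass_symm {X : Type*} [TopologicalSpace X] {x : X} (p : Path x x) :
    pathClass p.symm = (pathClass p)⁻¹ := by
  have h : pathClass p.symm * pathClass p = 1 := by
    rw [← pathClass_trans, ← pathClass_refl x]
    exact pathClass_homotopic ⟨(Path.Homotopy.reflTransSymm p).symm⟩
  exact eq_inv_of_mul_eq_one_left h

theorem pathClass_surjective {X : Type*} [TopologicalSpace X] {x : X}
    (g : FundamentalGroup X x) : ∃ l : Path x x, pathClass l = g := by
  obtain ⟨l, hl⟩ := Quotient.exists_rep (FundamentalGroup.toPath g)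
  exact ⟨l, hl⟩

theorem pathClass_reparam {X : Type*} [TopologicalSpace X] {x : X} (p : Path x x)
    (f : I → I) (hf : Continuous f) (h0 : f 0 = 0) (h1 : f 1 = 1) :
    pathClass (p.reparam f hf h0 h1) = pathClass p :=
  (pathClass_homotopic ⟨Path.Homotopy.reparam p f hf h0 h1⟩).symm

theorem continuous_loopMap (f : Y → Z) (hf : Continuous f) (hfy : f y = z) :
    Continuous (loopMap f hf hfy) := by
  apply continuous_induced_rng.2
  have : ((↑) : Path z z → C(I, Z)) ∘ loopMap f hf hfy
      = (ContinuousMap.comp ⟨f, hf⟩) ∘ ((↑) : Path y y → C(I, Y)) := by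
    funext l
    exact ContinuousMap.ext fun t => rfl
  rw [this]
  exact (ContinuousMap.continuous_postcomp _).comp continuous_induced_dom

end Stmt18Aux
namespace Stmt18Aux

open scoped commutatorElement in
theorem normal_of_commutator_le {G : Type*} [Group G] {H : Subgroup G}
    (h : commutator G ≤ H) : H.Normal := by
  constructor
  intro g hg a
  have h1 : ⁅a, g⁆ ∈ H := h (by
    rw [commutator_def]
    exact Subgroup.commutator_mem_commutator (Subgroup.mem_top a) (Subgroup.mem_top g))
  have h2 : a * g * a⁻¹ = ⁅a, g⁆ * g := by group
  rw [h2]; exact H.mul_mem h1 hg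

open scoped commutatorElement in
theorem quot_comm {G : Type*} [Group G] {H : Subgroup G} [H.Normal]
    (h : commutator G ≤ H) (u v : G ⧸ H) : u * v = v * u := by
  induction u using QuotientGroup.induction_on with | _ a => ?_
  induction v using QuotientGroup.induction_on with | _ b => ?_
  show QuotientGroup.mk (a * b) = QuotientGroup.mk (b * a)
  rw [QuotientGroup.eq]
  have : (a * b)⁻¹ * (b * a) = ⁅b⁻¹, a⁻¹⁆ := by group
  rw [this]
  exact h (by
    rw [commutator_def]
    exact Subgroup.commutator_mem_commutator (Subgroup.mem_top _) (Subgroup.mem_top _))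

/-- `G ⧸ H` is a commutative group when `H` contains the commutator subgroup. -/
def commGroupQuotient {G : Type*} [Group G] {H : Subgroup G} [H.Normal]
    (h : commutator G ≤ H) : CommGroup (G ⧸ H) :=
  { (inferInstance : Group (G ⧸ H)) with mul_comm := quot_comm h }

section LoopSets

open CategoryTheory

variable {Y : Type*} [TopologicalSpace Y] {Z : Type*} [TopologicalSpace Z] {y : Y} {z : Z}

theorem loopSet_comap (f : Y → Z) (hf : Continuous f) (hfy : f y = z)
    (H : Subgroup (FundamentalGroup Z z)) :
    loopSet (H.comap (indHom f hf hfy)) = loopMap f hf hfy ⁻¹' loopSet H := by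
  ext l
  show indHom f hf hfy (pathClass l) ∈ H ↔ pathClass (loopMap f hf hfy l) ∈ H
  rw [indHom_pathClass]

/-- predicate: a subgroup qualifies in the inf defining the strong commutator -/
def Qual {X : Type*} [TopologicalSpace X] {x : X} (H : Subgroup (FundamentalGroup X x)) : Prop :=
  commutator (FundamentalGroup X x) ≤ H ∧ IsClosed (loopSet H)

theorem strongCommutator_le {X : Type*} [TopologicalSpace X] {x : X}
    {H : Subgroup (FundamentalGroup X x)} (h : Qual H) : strongCommutator X x ≤ H :=
  iInf_le_of_le H (iInf_le _ h)

theorem qual_comap (f : Y → Z) (hf : Continuous f) (hfy : f y = z)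
    {H : Subgroup (FundamentalGroup Z z)} (hH : Qual H) :
    Qual (H.comap (indHom f hf hfy)) := by
  constructor
  · rw [commutator_def, Subgroup.commutator_le]
    intro g₁ _ g₂ _
    rw [Subgroup.mem_comap, map_commutatorElement]
    exact hH.1 (by
      rw [commutator_def]
      exact Subgroup.commutator_mem_commutator (Subgroup.mem_top _) (Subgroup.mem_top _))
  · rw [loopSet_comap]
    exact hH.2.preimage (continuous_loopMap f hf hfy)

theorem isClosed_loopSet_strongCommutator (X : Type*) [TopologicalSpace X] (x : X) :
    IsClosed (loopSet (strongCommutator X x)) := by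
  have h : loopSet (strongCommutator X x) =
      ⋂ (H : Subgroup (FundamentalGroup X x)) (_ : commutator (FundamentalGroup X x) ≤ H ∧
        IsClosed (loopSet H)), loopSet H := by
    ext l
    show pathClass l ∈ strongCommutator X x ↔ _
    rw [strongCommutator]
    simp only [Subgroup.mem_iInf, Set.mem_iInter]
    rfl
  rw [h]
  exact isClosed_iInter fun H => isClosed_iInter fun hH => hH.2

theorem qual_strongCommutator (X : Type*) [TopologicalSpace X] (x : X) :
    Qual (strongCommutator X x) :=
  ⟨commutator_le_strongCommutator X x, isClosed_loopSet_strongCommutator X x⟩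

theorem strongCommutator_le_comap (f : Y → Z) (hf : Continuous f) (hfy : f y = z) :
    strongCommutator Y y ≤ (strongCommutator Z z).comap (indHom f hf hfy) :=
  strongCommutator_le (qual_comap f hf hfy (qual_strongCommutator Z z))

theorem loopSet_iInf {X : Type*} [TopologicalSpace X] {x : X} {ι : Sort*}
    (Hs : ι → Subgroup (FundamentalGroup X x)) :
    loopSet (⨅ i, Hs i) = ⋂ i, loopSet (Hs i) := by
  ext l
  simp only [loopSet, Set.mem_setOf_eq, Subgroup.mem_iInf, Set.mem_iInter]

end LoopSets

end Stmt18Aux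
namespace Stmt18Aux

/-- All the data of a shrinking wedge. -/
structure WedgeData (X : ℕ → Type) [∀ n, MetricSpace (X n)] (x : ∀ n, X n)
    (W : Type) [MetricSpace W] (w : W) (φ : ∀ n, X n → W) : Prop where
  hdiam : ∀ (n : ℕ) (y z : X n), dist y z ≤ 2⁻¹ ^ n
  hbase : ∀ n, φ n (x n) = w
  hsurj : ∀ v : W, ∃ n yy, φ n yy = v
  hdist_same : ∀ (n : ℕ) (y z : X n), dist (φ n y) (φ n z) = dist y z
  hdist_ne : ∀ (n m : ℕ), n ≠ m → ∀ (y : X n) (z : X m),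
      dist (φ n y) (φ m z) = dist y (x n) + dist z (x m)

namespace WedgeData

variable {X : ℕ → Type} [∀ n, MetricSpace (X n)] {x : ∀ n, X n}
  {W : Type} [MetricSpace W] {w : W} {φ : ∀ n, X n → W}
  (D : WedgeData X x W w φ)

include D

theorem phi_isometry (n : ℕ) : Isometry (φ n) :=
  Isometry.of_dist_eq fun a b => D.hdist_same n a b

theorem phi_continuous (n : ℕ) : Continuous (φ n) := (D.phi_isometry n).continuous

theorem phi_inj (n : ℕ) : Function.Injective (φ n) := (D.phi_isometry n).injective

theorem dist_w (n : ℕ) (yv : X n) : dist (φ n yv) w = dist yv (x n) := by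
  rw [← D.hbase n, D.hdist_same]

theorem dist_w_le (n : ℕ) (yv : X n) : dist (φ n yv) w ≤ 2⁻¹ ^ n := by
  rw [D.dist_w]; exact D.hdiam n yv (x n)

omit D in
/-- the retraction onto the `n`-th wedge factor -/
noncomputable def r (_D : WedgeData X x W w φ) (n : ℕ) (v : W) : X n :=
  haveI := Classical.dec (∃ yy : X n, φ n yy = v)
  if h : ∃ yy : X n, φ n yy = v then h.choose else x n

theorem r_phi_self (n : ℕ) (yv : X n) : D.r n (φ n yv) = yv := by
  have h : ∃ yy : X n, φ n yy = φ n yv := ⟨yv, rfl⟩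
  rw [r]
  haveI := Classical.dec (∃ yy : X n, φ n yy = φ n yv)
  rw [dif_pos h]
  exact D.phi_inj n h.choose_spec

theorem r_phi_ne {n m : ℕ} (hmn : m ≠ n) (zz : X m) : D.r n (φ m zz) = x n := by
  haveI := Classical.dec (∃ yy : X n, φ n yy = φ m zz)
  by_cases h : ∃ yy : X n, φ n yy = φ m zz
  · rw [r, dif_pos h]
    have h2 := h.choose_spec
    have h3 : dist (φ n h.choose) (φ m zz) = dist h.choose (x n) + dist zz (x m) :=
      D.hdist_ne n m (Ne.symm hmn) _ _
    rw [h2, dist_self] at h3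
    have h4 : dist h.choose (x n) = 0 := by
      have := dist_nonneg (x := h.choose) (y := x n)
      have := dist_nonneg (x := zz) (y := x m)
      linarith
    exact dist_eq_zero.mp h4
  · rw [r, dif_neg h]


theorem r_w (n : ℕ) : D.r n w = x n := by
  have h := D.r_phi_self n (x n)
  rw [D.hbase] at h
  exact h

theorem r_lip (n : ℕ) (u v : W) : dist (D.r n u) (D.r n v) ≤ dist u v := by
  obtain ⟨a, ya, rfl⟩ := D.hsurj u
  obtain ⟨b, yb, rfl⟩ := D.hsurj v
  by_cases ha : a = n
  · subst ha
    rw [D.r_phi_self]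
    by_cases hb : b = a
    · subst hb; rw [D.r_phi_self, D.hdist_same]
    · rw [D.r_phi_ne hb]
      rw [D.hdist_ne a b (Ne.symm hb)]
      have := dist_nonneg (x := yb) (y := x b)
      linarith
  · rw [D.r_phi_ne ha]
    by_cases hb : b = n
    · subst hb
      rw [D.r_phi_self, D.hdist_ne a b (fun h => ha h), dist_comm (x b) yb]
      have := dist_nonneg (x := ya) (y := x a)
      linarith
    · rw [D.r_phi_ne hb, dist_self]
      exact dist_nonneg

theorem r_continuous (n : ℕ) : Continuous (D.r n) := by
  have h : LipschitzWith 1 (D.r n) := LipschitzWith.of_dist_le_mul fun u v => by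
    rw [NNReal.coe_one, one_mul]; exact D.r_lip n u v
  exact h.continuous

/-- the projection of the wedge onto its `n`-th factor, inside the wedge -/
noncomputable def pns (n : ℕ) (v : W) : W := φ n (D.r n v)

theorem pns_continuous (n : ℕ) : Continuous (D.pns n) :=
  (D.phi_continuous n).comp (D.r_continuous n)

theorem pns_w (n : ℕ) : D.pns n w = w := by rw [pns, D.r_w, D.hbase]

theorem pns_phi_self (n : ℕ) (yv : X n) : D.pns n (φ n yv) = φ n yv := by
  rw [pns, D.r_phi_self]

theorem pns_phi_ne {n m : ℕ} (hmn : m ≠ n) (zz : X m) : D.pns n (φ m zz) = w := by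
  rw [pns, D.r_phi_ne hmn, D.hbase]

theorem pns_dist_w (n : ℕ) (v : W) : dist (D.pns n v) w ≤ dist v w := by
  have h1 : dist (D.pns n v) w = dist (D.r n v) (x n) := by rw [pns, D.dist_w]
  rw [h1, ← D.r_w n]
  exact D.r_lip n v w

theorem dist_w_le_of_mem (v : W) : ∃ n, v ∈ Set.range (φ n) := by
  obtain ⟨n, yy, rfl⟩ := D.hsurj v
  exact ⟨n, yy, rfl⟩

theorem pns_of_mem_range {n : ℕ} {v : W} (hv : v ∈ Set.range (φ n)) : D.pns n v = v := by
  obtain ⟨yv, rfl⟩ := hv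
  exact D.pns_phi_self n yv

theorem pns_of_mem_range_ne {n m : ℕ} (hmn : m ≠ n) {v : W} (hv : v ∈ Set.range (φ m)) :
    D.pns n v = w := by
  obtain ⟨zz, rfl⟩ := hv
  exact D.pns_phi_ne hmn zz

theorem range_inter {n m : ℕ} (hmn : m ≠ n) {v : W} (hv : v ∈ Set.range (φ m))
    (hv' : v ∈ Set.range (φ n)) : v = w := by
  obtain ⟨zz, rfl⟩ := hv
  obtain ⟨yy, hyy⟩ := hv'
  have h3 : dist (φ n yy) (φ m zz) = dist yy (x n) + dist zz (x m) :=
    D.hdist_ne n m (Ne.symm hmn) _ _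
  rw [hyy, dist_self] at h3
  have h4 : dist zz (x m) = 0 := by
    have := dist_nonneg (x := yy) (y := x n)
    have := dist_nonneg (x := zz) (y := x m)
    linarith
  rw [dist_eq_zero.mp h4, D.hbase]

theorem isOpen_range_diff (n : ℕ) : IsOpen (Set.range (φ n) \ {w}) := by
  rw [Metric.isOpen_iff]
  rintro v ⟨hv, hvw⟩
  refine ⟨dist v w, dist_pos.mpr (fun h => hvw h), ?_⟩
  intro u hu
  rw [Metric.mem_ball] at hu
  obtain ⟨b, yb, rfl⟩ := D.hsurj u
  obtain ⟨ya, rfl⟩ := hv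
  have hw : dist (φ n ya) w = dist ya (x n) := D.dist_w n ya
  constructor
  · by_cases hb : b = n
    · subst hb; exact ⟨yb, rfl⟩
    · exfalso
      rw [D.hdist_ne b n hb yb ya, hw] at hu
      have h1 := dist_nonneg (x := yb) (y := x b)
      linarith
  · intro h
    rw [Set.mem_singleton_iff] at h
    rw [h] at hu
    rw [dist_comm] at hu
    exact absurd hu (lt_irrefl _)

end WedgeData
end Stmt18Aux
namespace Stmt18Aux

section Splitting

open unitInterval

variable {Z : Type*} [TopologicalSpace Z] {w : Z}

/-- rescaled restriction of a loop to `[a,b]`, as a loop (assuming endpoint values `w`) -/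
noncomputable def piece (l : Path w w) (a b : ℝ) (ha : l.extend a = w) (hb : l.extend b = w) :
    Path w w where
  toFun t := l.extend (a + (t : ℝ) * (b - a))
  continuous_toFun := l.continuous_extend.comp (by continuity)
  source' := by
    show l.extend (a + ((0 : unitInterval) : ℝ) * (b - a)) = w
    rw [Set.Icc.coe_zero]
    simpa using ha
  target' := by
    show l.extend (a + ((1 : unitInterval) : ℝ) * (b - a)) = w
    rw [Set.Icc.coe_one]
    have : a + 1 * (b - a) = b := by ring
    rw [this]
    exact hb

theorem piece_apply (l : Path w w) (a b : ℝ) (ha : l.extend a = w) (hb : l.extend b = w)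
    (t : unitInterval) : piece l a b ha hb t = l.extend (a + (t : ℝ) * (b - a)) := rfl

/-- the loop `l` with the portion on `[a,b]` replaced by the constant `w` -/
noncomputable def cutLoop (l : Path w w) (a b : ℝ) (hab : a ≤ b) (ha : l.extend a = w)
    (hb : l.extend b = w) : Path w w where
  toFun t := if (t : ℝ) ≤ a then l t else if (t : ℝ) ≤ b then w else l t
  continuous_toFun := by
    apply Continuous.if_le
    · exact l.continuous
    · apply Continuous.if_le
      · exact continuous_const
      · exact l.continuous
      · exact continuous_subtype_val
      · exact continuous_const
      · intro t ht
        have : l t = l.extend b := by rw [← ht]; exact (l.extend_extends' t).symm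
        rw [this, hb]
    · exact continuous_subtype_val
    · exact continuous_const
    · intro t ht
      have h1 : l t = l.extend a := by rw [← ht]; exact (l.extend_extends' t).symm
      rw [h1, ha]; split <;> rfl
  source' := by
    have h0 : ((0 : unitInterval) : ℝ) = 0 := rfl
    by_cases h : (0:ℝ) ≤ a
    · show (if ((0:unitInterval) : ℝ) ≤ a then l 0 else _) = w
      rw [h0, if_pos h, l.source]
    · show (if ((0:unitInterval) : ℝ) ≤ a then l 0 else if ((0:unitInterval):ℝ) ≤ b then w else l 0) = w
      rw [h0, if_neg h]
      by_cases h2 : (0:ℝ) ≤ b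
      · rw [if_pos h2]
      · rw [if_neg h2, l.source]
  target' := by
    have h1 : ((1 : unitInterval) : ℝ) = 1 := rfl
    by_cases h : (1:ℝ) ≤ a
    · show (if ((1:unitInterval) : ℝ) ≤ a then l 1 else _) = w
      rw [h1, if_pos h, l.target]
    · show (if ((1:unitInterval) : ℝ) ≤ a then l 1 else if ((1:unitInterval):ℝ) ≤ b then w else l 1) = w
      rw [h1, if_neg h]
      by_cases h2 : (1:ℝ) ≤ b
      · rw [if_pos h2]
      · rw [if_neg h2, l.target]

theorem cutLoop_apply (l : Path w w) (a b : ℝ) (hab : a ≤ b) (ha : l.extend a = w)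
    (hb : l.extend b = w) (t : unitInterval) :
    cutLoop l a b hab ha hb t = if (t : ℝ) ≤ a then l t else if (t : ℝ) ≤ b then w else l t :=
  rfl

end Splitting

end Stmt18Aux
namespace Stmt18Aux

section Splitting2

open unitInterval

variable {Z : Type*} [TopologicalSpace Z] {w : Z}

/-- reparametrization function for the three-piece splitting -/
noncomputable def spf (a b : ℝ) (u : ℝ) : ℝ :=
  if u ≤ 1/2 then 2*u*a else if u ≤ 3/4 then a + (4*u-2)*(b-a) else b + (4*u-3)*(1-b)

theorem spf_cont (a b : ℝ) : Continuous (spf a b) := by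
  apply Continuous.if_le
  · continuity
  · apply Continuous.if_le
    · continuity
    · continuity
    · exact continuous_id
    · exact continuous_const
    · intro u hu
      rw [hu]; ring
  · exact continuous_id
  · exact continuous_const
  · intro u hu
    rw [hu]
    rw [if_pos (by norm_num : (1:ℝ)/2 ≤ 3/4)]
    ring

theorem spf_mem {a b : ℝ} (h0 : 0 ≤ a) (hab : a ≤ b) (hb1 : b ≤ 1) {u : ℝ}
    (hu : u ∈ unitInterval) : spf a b u ∈ unitInterval := by
  obtain ⟨hu0, hu1⟩ := hu
  rw [spf]
  split_ifs with h1 h2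
  · constructor
    · positivity
    · nlinarith
  · constructor
    · nlinarith
    · nlinarith
  · constructor
    · nlinarith
    · nlinarith

/-- `spf` as a self-map of the unit interval -/
noncomputable def spfI (a b : ℝ) (h0 : 0 ≤ a) (hab : a ≤ b) (hb1 : b ≤ 1) :
    unitInterval → unitInterval :=
  fun t => ⟨spf a b t, spf_mem h0 hab hb1 t.2⟩

theorem spfI_cont (a b : ℝ) (h0 : 0 ≤ a) (hab : a ≤ b) (hb1 : b ≤ 1) :
    Continuous (spfI a b h0 hab hb1) :=
  Continuous.subtype_mk ((spf_cont a b).comp continuous_subtype_val) _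

theorem spfI_zero (a b : ℝ) (h0 : 0 ≤ a) (hab : a ≤ b) (hb1 : b ≤ 1) :
    spfI a b h0 hab hb1 0 = 0 := by
  apply Subtype.ext
  show spf a b ((0:unitInterval):ℝ) = 0
  rw [Set.Icc.coe_zero, spf, if_pos (by norm_num : (0:ℝ) ≤ 1/2)]
  ring

theorem spfI_one (a b : ℝ) (h0 : 0 ≤ a) (hab : a ≤ b) (hb1 : b ≤ 1) :
    spfI a b h0 hab hb1 1 = 1 := by
  apply Subtype.ext
  show spf a b ((1:unitInterval):ℝ) = 1
  rw [Set.Icc.coe_one, spf, if_neg (by norm_num : ¬((1:ℝ) ≤ 1/2)),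
    if_neg (by norm_num : ¬((1:ℝ) ≤ 3/4))]
  ring

theorem l_spfI (l : Path w w) (a b : ℝ) (h0 : 0 ≤ a) (hab : a ≤ b) (hb1 : b ≤ 1)
    (t : unitInterval) : l (spfI a b h0 hab hb1 t) = l.extend (spf a b (t : ℝ)) :=
  (l.extend_apply ⟨(spf_mem h0 hab hb1 t.2).1, (spf_mem h0 hab hb1 t.2).2⟩).symm

theorem splitting_eq (l : Path w w) (a b : ℝ) (h0 : 0 ≤ a) (hab : a ≤ b) (hb1 : b ≤ 1)
    (ha : l.extend a = w) (hb : l.extend b = w) :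
    (piece l 0 a l.extend_zero ha).trans
        ((piece l a b ha hb).trans (piece l b 1 hb l.extend_one))
      = l.reparam (spfI a b h0 hab hb1) (spfI_cont a b h0 hab hb1)
          (spfI_zero a b h0 hab hb1) (spfI_one a b h0 hab hb1) := by
  apply Path.ext
  funext t
  rw [Path.coe_reparam]
  show _ = l (spfI a b h0 hab hb1 t)
  rw [l_spfI]
  rw [Path.trans_apply]
  rcases le_or_gt (t : ℝ) (1/2) with h1 | h1
  · rw [dif_pos h1]
    rw [piece_apply]
    rw [spf, if_pos h1]
    congr 1
    push_cast
    ring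
  · rw [dif_neg (not_le.mpr h1)]
    rw [Path.trans_apply]
    rcases le_or_gt (2*(t:ℝ)-1) (1/2) with h2 | h2
    · have h2t : (t:ℝ) ≤ 3/4 := by linarith
      rw [dif_pos h2]
      rw [piece_apply]
      rw [spf, if_neg (not_le.mpr h1), if_pos h2t]
      congr 1
      push_cast
      ring
    · have h2t : ¬ ((t:ℝ) ≤ 3/4) := by push_neg; linarith
      rw [dif_neg (not_le.mpr h2)]
      rw [piece_apply]
      rw [spf, if_neg (not_le.mpr h1), if_neg h2t]
      congr 1
      push_cast
      ring

theorem splitting_eq_cut (l : Path w w) (a b : ℝ) (h0 : 0 ≤ a) (hab : a ≤ b) (hb1 : b ≤ 1)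
    (ha : l.extend a = w) (hb : l.extend b = w) :
    (piece l 0 a l.extend_zero ha).trans
        ((Path.refl w).trans (piece l b 1 hb l.extend_one))
      = (cutLoop l a b hab ha hb).reparam (spfI a b h0 hab hb1) (spfI_cont a b h0 hab hb1)
          (spfI_zero a b h0 hab hb1) (spfI_one a b h0 hab hb1) := by
  have hext : ∀ u : ℝ, u ∈ unitInterval → (cutLoop l a b hab ha hb).extend u
      = if u ≤ a then l.extend u else if u ≤ b then w else l.extend u := by
    intro u hu
    rw [Path.extend_apply _ hu, cutLoop_apply]
    rw [Path.extend_apply _ hu]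
  apply Path.ext
  funext t
  rw [Path.coe_reparam]
  show _ = (cutLoop l a b hab ha hb) (spfI a b h0 hab hb1 t)
  rw [l_spfI (cutLoop l a b hab ha hb) a b h0 hab hb1 t]
  rw [hext _ (spf_mem h0 hab hb1 t.2)]
  rw [Path.trans_apply]
  rcases le_or_gt (t : ℝ) (1/2) with h1 | h1
  · rw [dif_pos h1]
    rw [piece_apply]
    have hval : spf a b (t : ℝ) = 2 * (t:ℝ) * a := by rw [spf, if_pos h1]
    have hle : spf a b (t:ℝ) ≤ a := by
      rw [hval]
      nlinarith [t.2.1, t.2.2]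
    rw [if_pos hle, hval]
    congr 1
    push_cast
    ring
  · rw [dif_neg (not_le.mpr h1)]
    rw [Path.trans_apply]
    rcases le_or_gt (2*(t:ℝ)-1) (1/2) with h2 | h2
    · have h2t : (t:ℝ) ≤ 3/4 := by linarith
      rw [dif_pos h2]
      rw [Path.refl_apply]
      have hval : spf a b (t : ℝ) = a + (4*(t:ℝ)-2)*(b-a) := by
        rw [spf, if_neg (not_le.mpr h1), if_pos h2t]
      have hgea : a ≤ spf a b (t:ℝ) := by rw [hval]; nlinarith
      have hleb : spf a b (t:ℝ) ≤ b := by rw [hval]; nlinarith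
      have hw : (if spf a b (t:ℝ) ≤ a then l.extend (spf a b (t:ℝ))
          else if spf a b (t:ℝ) ≤ b then w else l.extend (spf a b (t:ℝ))) = w := by
        by_cases c1 : spf a b (t:ℝ) ≤ a
        · rw [if_pos c1]
          have heq : spf a b (t:ℝ) = a := le_antisymm c1 hgea
          rw [heq, ha]
        · rw [if_neg c1, if_pos hleb]
      rw [hw]
    · have h2t : ¬ ((t:ℝ) ≤ 3/4) := by push_neg; linarith
      rw [dif_neg (not_le.mpr h2)]
      rw [piece_apply]
      have hval : spf a b (t : ℝ) = b + (4*(t:ℝ)-3)*(1-b) := by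
        rw [spf, if_neg (not_le.mpr h1), if_neg h2t]
      have hgeb : b ≤ spf a b (t:ℝ) := by rw [hval]; nlinarith [t.2.2]
      have hw : (if spf a b (t:ℝ) ≤ a then l.extend (spf a b (t:ℝ))
          else if spf a b (t:ℝ) ≤ b then w else l.extend (spf a b (t:ℝ)))
          = l.extend (spf a b (t:ℝ)) := by
        by_cases c1 : spf a b (t:ℝ) ≤ a
        · rw [if_pos c1]
        · rw [if_neg c1]
          by_cases c2 : spf a b (t:ℝ) ≤ b
          · rw [if_pos c2]
            have hba : spf a b (t:ℝ) = b := le_antisymm c2 hgeb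
            rw [hba, hb]
          · rw [if_neg c2]
      rw [hw]
      congr 1
      push_cast
      rw [hval]
      ring

end Splitting2

end Stmt18Aux
namespace Stmt18Aux

section QSplit

open unitInterval

variable {Z : Type*} [TopologicalSpace Z] {w : Z}
variable {H : Subgroup (FundamentalGroup Z w)} [H.Normal]

/-- the class of a loop in the quotient of the fundamental group by `H` -/
noncomputable def qcl (H : Subgroup (FundamentalGroup Z w)) [H.Normal] (l : Path w w) :
    FundamentalGroup Z w ⧸ H :=
  QuotientGroup.mk (pathClass l)

theorem qcl_trans (p q : Path w w) : qcl H (p.trans q) = qcl H q * qcl H p := by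
  rw [qcl, qcl, qcl, pathClass_trans, QuotientGroup.mk_mul]

theorem qcl_symm (p : Path w w) : qcl H p.symm = (qcl H p)⁻¹ := by
  rw [qcl, qcl, pathClass_symm, QuotientGroup.mk_inv]

theorem qcl_refl : qcl H (Path.refl w) = 1 := by
  rw [qcl, pathClass_refl, QuotientGroup.mk_one]

theorem q_split (hcomm : commutator (FundamentalGroup Z w) ≤ H) (l : Path w w)
    {a b : ℝ} (h0 : 0 ≤ a) (hab : a ≤ b) (hb1 : b ≤ 1)
    (ha : l.extend a = w) (hb : l.extend b = w) :
    qcl H l = qcl H (cutLoop l a b hab ha hb) * qcl H (piece l a b ha hb) := by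
  have comm := quot_comm (H := H) hcomm
  have p1 : pathClass l
      = pathClass (piece l b 1 hb l.extend_one) * pathClass (piece l a b ha hb)
        * pathClass (piece l 0 a l.extend_zero ha) := by
    rw [← pathClass_reparam l (spfI a b h0 hab hb1) (spfI_cont a b h0 hab hb1)
      (spfI_zero a b h0 hab hb1) (spfI_one a b h0 hab hb1)]
    rw [← splitting_eq l a b h0 hab hb1 ha hb]
    rw [pathClass_trans, pathClass_trans]
  have p2 : pathClass (cutLoop l a b hab ha hb)
      = pathClass (piece l b 1 hb l.extend_one) * 1
        * pathClass (piece l 0 a l.extend_zero ha) := by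
    rw [← pathClass_reparam (cutLoop l a b hab ha hb) (spfI a b h0 hab hb1)
      (spfI_cont a b h0 hab hb1) (spfI_zero a b h0 hab hb1) (spfI_one a b h0 hab hb1)]
    rw [← splitting_eq_cut l a b h0 hab hb1 ha hb]
    rw [pathClass_trans, pathClass_trans, pathClass_refl]
  rw [qcl, qcl, qcl, p1, p2, mul_one]
  rw [QuotientGroup.mk_mul, QuotientGroup.mk_mul, QuotientGroup.mk_mul]
  set A := (QuotientGroup.mk (pathClass (piece l 0 a l.extend_zero ha)) :
    FundamentalGroup Z w ⧸ H)
  set B := (QuotientGroup.mk (pathClass (piece l a b ha hb)) :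
    FundamentalGroup Z w ⧸ H)
  set C := (QuotientGroup.mk (pathClass (piece l b 1 hb l.extend_one)) :
    FundamentalGroup Z w ⧸ H)
  rw [mul_assoc, comm B A, ← mul_assoc]

end QSplit

section QProd

/-- finite ordered product `v 0 * v 1 * ⋯ * v (k-1)` -/
def qprod {G : Type*} [Group G] (v : ℕ → G) : ℕ → G
  | 0 => 1
  | (k+1) => qprod v k * v k

theorem qprod_congr {G : Type*} [Group G] {v v' : ℕ → G} {M : ℕ}
    (h : ∀ m, m < M → v m = v' m) : qprod v M = qprod v' M := by
  induction M with
  | zero => rfl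
  | succ k ih =>
    rw [qprod, qprod, ih (fun m hm => h m (Nat.lt_succ_of_lt hm)), h k (Nat.lt_succ_self k)]

theorem qprod_one {G : Type*} [Group G] (M : ℕ) : qprod (fun _ => (1:G)) M = 1 := by
  induction M with
  | zero => rfl
  | succ k ih => rw [qprod, ih, mul_one]

theorem qprod_mul_single {G : Type*} [Group G] (comm : ∀ u v : G, u * v = v * u)
    {v v' : ℕ → G} {e : G} {M m₀ : ℕ} (hm₀ : m₀ < M)
    (h : ∀ m, m < M → v m = v' m * (if m = m₀ then e else 1)) :
    qprod v M = qprod v' M * e := by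
  induction M with
  | zero => exact absurd hm₀ (Nat.not_lt_zero m₀)
  | succ k ih =>
    rcases Nat.lt_succ_iff_lt_or_eq.mp hm₀ with hk | hk
    · have hvk : v k = v' k := by
        have := h k (Nat.lt_succ_self k)
        rw [if_neg (by omega : ¬ k = m₀), mul_one] at this
        exact this
      rw [qprod, qprod, ih hk (fun m hm => h m (Nat.lt_succ_of_lt hm)), hvk]
      rw [mul_assoc, comm e (v' k), ← mul_assoc]
    · subst hk
      have hvk : v m₀ = v' m₀ * e := by
        have := h m₀ (Nat.lt_succ_self m₀)
        rw [if_pos rfl] at this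
        exact this
      have hcongr : qprod v m₀ = qprod v' m₀ := by
        apply qprod_congr
        intro m hm
        have := h m (Nat.lt_succ_of_lt hm)
        rw [if_neg (by omega : ¬ m = m₀), mul_one] at this
        exact this
      rw [qprod, qprod, hcongr, hvk, ← mul_assoc]

end QProd

section Chains

open unitInterval

variable {Z : Type*} [TopologicalSpace Z] {w : Z}

/-- iterated concatenation of inverses: `(u (k-1))⁻¹ ⋯ (u 0)⁻¹ l₀` as loops -/
noncomputable def revChain (u : ℕ → Path w w) (l0 : Path w w) : ℕ → Path w w
  | 0 => l0
  | (k+1) => ((u k).symm).trans (revChain u l0 k)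

theorem revChain_qcl {H : Subgroup (FundamentalGroup Z w)} [H.Normal]
    (hcomm : commutator (FundamentalGroup Z w) ≤ H)
    (u : ℕ → Path w w) (l0 : Path w w) (k : ℕ) :
    qcl H (revChain u l0 k) = (qprod (fun m => qcl H (u m)) k)⁻¹ * qcl H l0 := by
  have comm := quot_comm (H := H) hcomm
  induction k with
  | zero =>
    rw [revChain, qprod, inv_one, one_mul]
  | succ k ih =>
    rw [revChain, qcl_trans, qcl_symm, ih, qprod, mul_inv_rev]
    rw [comm ((qprod (fun m => qcl H (u m)) k)⁻¹ * qcl H l0) ((qcl H (u k))⁻¹), ← mul_assoc]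

theorem dist_trans_le {ε : ℝ} {c1 c2 : Path w w} [PseudoMetricSpace Z]
    (h1 : ∀ t, dist (c1 t) w ≤ ε) (h2 : ∀ t, dist (c2 t) w ≤ ε) :
    ∀ t, dist ((c1.trans c2) t) w ≤ ε := by
  intro t
  rw [Path.trans_apply]
  split_ifs
  · exact h1 _
  · exact h2 _

theorem dist_symm_le {ε : ℝ} {c : Path w w} [PseudoMetricSpace Z]
    (h : ∀ t, dist (c t) w ≤ ε) : ∀ t, dist (c.symm t) w ≤ ε := fun t => h _

theorem revChain_small [PseudoMetricSpace Z] {ε : ℝ} {u : ℕ → Path w w} {l0 : Path w w}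
    (hu : ∀ m t, dist (u m t) w ≤ ε) (h0 : ∀ t, dist (l0 t) w ≤ ε) (k : ℕ) :
    ∀ t, dist ((revChain u l0 k) t) w ≤ ε := by
  induction k with
  | zero => exact h0
  | succ k ih =>
    exact dist_trans_le (dist_symm_le (hu k)) ih

end Chains

end Stmt18Aux
namespace Stmt18Aux

section Modulus

theorem extend_modulus {Zm : Type*} [MetricSpace Zm] {a b : Zm} (l : Path a b) {ε : ℝ}
    (hε : 0 < ε) :
    ∃ δ > 0, ∀ s t : ℝ, dist s t < δ → dist (l.extend s) (l.extend t) < ε := by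
  have hu : UniformContinuous (l : unitInterval → Zm) :=
    CompactSpace.uniformContinuous_of_continuous l.continuous
  rw [Metric.uniformContinuous_iff] at hu
  obtain ⟨δ, hδ, hmod⟩ := hu ε hε
  refine ⟨δ, hδ, fun s t hst => ?_⟩
  have hl := (LipschitzWith.projIcc (zero_le_one (α := ℝ))).dist_le_mul s t
  rw [NNReal.coe_one, one_mul] at hl
  exact hmod (lt_of_le_of_lt hl hst)

end Modulus

section MainSplit

open unitInterval

variable {X : ℕ → Type} [∀ n, MetricSpace (X n)] {x : ∀ n, X n}
  {W : Type} [MetricSpace W] {w : W} {φ : ∀ n, X n → W}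
  (D : WedgeData X x W w φ)

include D

/-- the loop in the wedge projected onto the m-th factor -/
noncomputable def WedgeData.F (m : ℕ) (l₀ : Path w w) : Path w w :=
  loopMap (D.pns m) (D.pns_continuous m) (D.pns_w m) l₀

theorem WedgeData.F_apply (m : ℕ) (l₀ : Path w w) (t : unitInterval) : D.F m l₀ t = D.pns m (l₀ t) := rfl

theorem WedgeData.F_extend (m : ℕ) (l₀ : Path w w) (s : ℝ) :
    (D.F m l₀).extend s = D.pns m (l₀.extend s) := rfl

theorem WedgeData.F_small (m : ℕ) {ε : ℝ} {l₀ : Path w w} (h : ∀ t, dist (l₀ t) w ≤ ε) :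
    ∀ t, dist ((D.F m l₀) t) w ≤ ε :=
  fun t => le_trans (D.pns_dist_w m (l₀ t)) (h t)

theorem WedgeData.small_case {H : Subgroup (FundamentalGroup W w)} [H.Normal]
    (hcomm : commutator (FundamentalGroup W w) ≤ H) {ε : ℝ} (M : ℕ)
    (l₀ : Path w w) (hsmall : ∀ t, dist (l₀ t) w ≤ ε) :
    ∃ c : Path w w, (∀ t, dist (c t) w ≤ ε) ∧
      qcl H l₀ = qprod (fun m => qcl H (D.F m l₀)) M * qcl H c := by
  refine ⟨revChain (fun m => D.F m l₀) l₀ M,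
    revChain_small (fun m => D.F_small m hsmall) hsmall M, ?_⟩
  rw [revChain_qcl hcomm]
  exact (mul_inv_cancel_left _ _).symm

omit D in
theorem loopMap_cutLoop (f : W → W) (hf : Continuous f) (hfw : f w = w) (l₀ : Path w w)
    {a b : ℝ} (hab : a ≤ b) (ha : l₀.extend a = w) (hb : l₀.extend b = w)
    (ha' : (loopMap f hf hfw l₀).extend a = w) (hb' : (loopMap f hf hfw l₀).extend b = w) :
    loopMap f hf hfw (cutLoop l₀ a b hab ha hb)
      = cutLoop (loopMap f hf hfw l₀) a b hab ha' hb' := by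
  apply Path.ext
  funext t
  show f (cutLoop l₀ a b hab ha hb t) = cutLoop (loopMap f hf hfw l₀) a b hab ha' hb' t
  rw [cutLoop_apply, cutLoop_apply]
  split_ifs
  · rfl
  · exact hfw
  · rfl

omit D in
theorem loopMap_piece (f : W → W) (hf : Continuous f) (hfw : f w = w) (l₀ : Path w w)
    {a b : ℝ} (ha : l₀.extend a = w) (hb : l₀.extend b = w)
    (ha' : (loopMap f hf hfw l₀).extend a = w) (hb' : (loopMap f hf hfw l₀).extend b = w) :
    loopMap f hf hfw (piece l₀ a b ha hb) = piece (loopMap f hf hfw l₀) a b ha' hb' := by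
  apply Path.ext
  rfl

theorem WedgeData.excursion_range {l₀ : Path w w} {p q : ℝ}
    (hw : ∀ s : ℝ, p < s → s < q → l₀.extend s ≠ w)
    {t₀ : ℝ} (hpt : p < t₀) (htq : t₀ < q) {m₀ : ℕ}
    (hm : l₀.extend t₀ ∈ Set.range (φ m₀)) :
    ∀ s : ℝ, p < s → s < q → l₀.extend s ∈ Set.range (φ m₀) := by
  set U : Set ℝ := l₀.extend ⁻¹' (Set.range (φ m₀) \ {w}) with hU
  set V : Set ℝ := l₀.extend ⁻¹' (⋃ (m : ℕ) (_ : m ≠ m₀), (Set.range (φ m) \ {w})) with hV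
  have hUopen : IsOpen U := (D.isOpen_range_diff m₀).preimage l₀.continuous_extend
  have hVopen : IsOpen V := by
    apply IsOpen.preimage l₀.continuous_extend
    exact isOpen_iUnion fun m => isOpen_iUnion fun _ => D.isOpen_range_diff m
  have hsub : Set.Ioo p q ⊆ U ∪ V := by
    intro s hs
    obtain ⟨m, ym, hym⟩ := D.hsurj (l₀.extend s)
    by_cases hmm : m = m₀
    · subst hmm
      exact Or.inl ⟨⟨ym, hym⟩, hw s hs.1 hs.2⟩
    · right
      rw [hV, Set.mem_preimage, Set.mem_iUnion]
      exact ⟨m, Set.mem_iUnion.mpr ⟨hmm, ⟨ym, hym⟩, hw s hs.1 hs.2⟩⟩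
  intro s hps hsq
  by_contra hcon
  have hsV : s ∈ Set.Ioo p q ∩ V := by
    refine ⟨⟨hps, hsq⟩, ?_⟩
    rcases hsub ⟨hps, hsq⟩ with h | h
    · exact absurd h.1 hcon
    · exact h
  have htU : t₀ ∈ Set.Ioo p q ∩ U := ⟨⟨hpt, htq⟩, hm, hw t₀ hpt htq⟩
  obtain ⟨z, hz⟩ := isPreconnected_Ioo (a := p) (b := q) U V hUopen hVopen hsub
    ⟨t₀, htU⟩ ⟨s, hsV⟩
  obtain ⟨hzIoo, hzU, hzV⟩ := hz
  rw [hV, Set.mem_preimage, Set.mem_iUnion] at hzV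
  obtain ⟨m, hzm⟩ := hzV
  rw [Set.mem_iUnion] at hzm
  obtain ⟨hmne, hzm⟩ := hzm
  exact absurd (D.range_inter hmne hzm.1 hzU.1) hzU.2

end MainSplit

end Stmt18Aux
namespace Stmt18Aux

section Master

open unitInterval

theorem cutLoop_extend {Z : Type*} [TopologicalSpace Z] {w : Z} (l : Path w w) {a b : ℝ}
    (hab : a ≤ b) (ha : l.extend a = w) (hb : l.extend b = w) {u : ℝ}
    (hu : u ∈ Set.Icc (0:ℝ) 1) :
    (cutLoop l a b hab ha hb).extend u
      = if u ≤ a then l.extend u else if u ≤ b then w else l.extend u := by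
  rw [Path.extend_apply _ hu, cutLoop_apply, Path.extend_apply _ hu]

variable {X : ℕ → Type} [∀ n, MetricSpace (X n)] {x : ∀ n, X n}
  {W : Type} [MetricSpace W] {w : W} {φ : ∀ n, X n → W}
  (D : WedgeData X x W w φ)

include D

theorem WedgeData.main_split {H : Subgroup (FundamentalGroup W w)} [H.Normal]
    (hcomm : commutator (FundamentalGroup W w) ≤ H) {ε : ℝ} (hε : 0 < ε) {M : ℕ}
    (hM : (2:ℝ)⁻¹ ^ M < ε) (l : Path w w) :
    ∃ c : Path w w, (∀ t, dist (c t) w ≤ ε) ∧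
      qcl H l = qprod (fun m => qcl H (D.F m l)) M * qcl H c := by
  have comm := quot_comm (H := H) hcomm
  obtain ⟨δ, hδ, hmod⟩ := extend_modulus l hε
  obtain ⟨n0, hn0⟩ : ∃ n : ℕ, 1 ≤ (n : ℝ) * δ := by
    refine ⟨⌈1/δ⌉₊, ?_⟩
    have h1 := Nat.le_ceil (1/δ)
    have h2 : (1/δ) * δ ≤ (⌈1/δ⌉₊ : ℝ) * δ := mul_le_mul_of_nonneg_right h1 hδ.le
    rw [div_mul_cancel₀ 1 (ne_of_gt hδ)] at h2
    exact h2
  suffices hind : ∀ (n : ℕ) (l₀ : Path w w) (a : ℝ),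
      (∀ s : ℝ, a ≤ s → l₀.extend s = l.extend s) →
      (∀ s : ℝ, ε ≤ dist (l₀.extend s) w → a ≤ s ∧ 1 - (n:ℝ)*δ ≤ s) →
      ∃ c : Path w w, (∀ t, dist (c t) w ≤ ε) ∧
        qcl H l₀ = qprod (fun m => qcl H (D.F m l₀)) M * qcl H c by
    refine hind n0 l 0 (fun _ _ => rfl) (fun s hs => ?_)
    have hs0 : (0:ℝ) ≤ s := by
      by_contra hc
      push_neg at hc
      rw [Path.extend_of_le_zero _ hc.le, dist_self] at hs
      linarith
    exact ⟨hs0, by linarith⟩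
  intro n
  induction n with
  | zero =>
    intro l₀ a hagree hB
    apply D.small_case hcomm M l₀
    intro t
    by_contra hc
    push_neg at hc
    have hext : l₀.extend (t:ℝ) = l₀ t := l₀.extend_extends' t
    have h2 := (hB (t:ℝ) (by rw [hext]; exact hc.le)).2
    push_cast at h2
    have ht1 : (t:ℝ) = 1 := le_antisymm t.2.2 (by linarith)
    have h3 : l₀ t = w := by
      rw [← hext, ht1, Path.extend_one]
    rw [h3, dist_self] at hc
    linarith
  | succ n ih =>
    intro l₀ a hagree hB
    by_cases hsm : ∀ t, dist (l₀ t) w ≤ ε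
    · exact D.small_case hcomm M l₀ hsm
    push_neg at hsm
    obtain ⟨tbig, htbig⟩ := hsm
    -- the compact set of "big" times
    set B : Set ℝ := {s : ℝ | s ∈ Set.Icc (0:ℝ) 1 ∧ ε ≤ dist (l₀.extend s) w} with hBdef
    have hBclosed : IsClosed B := by
      apply IsClosed.inter isClosed_Icc
      exact isClosed_le continuous_const (l₀.continuous_extend.dist continuous_const)
    have hBsub : B ⊆ Set.Icc 0 1 := fun s hs => hs.1
    have hBcpt : IsCompact B := isCompact_Icc.of_isClosed_subset hBclosed hBsub
    have hBne : B.Nonempty := by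
      refine ⟨(tbig : ℝ), ?_⟩
      rw [hBdef]
      refine ⟨tbig.2, ?_⟩
      rw [l₀.extend_extends' tbig]
      exact htbig.le
    have hBmem : ∀ s : ℝ, s ∈ Set.Icc (0:ℝ) 1 → ε ≤ dist (l₀.extend s) w → s ∈ B := by
      intro s h1 h2
      rw [hBdef]
      exact ⟨h1, h2⟩
    obtain ⟨t₀, ht₀B, ht₀lb⟩ := hBcpt.exists_isLeast hBne
    have ht₀B' : t₀ ∈ Set.Icc (0:ℝ) 1 ∧ ε ≤ dist (l₀.extend t₀) w := by
      rw [hBdef] at ht₀B; exact ht₀B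
    have ht₀dist : ε ≤ dist (l₀.extend t₀) w := ht₀B'.2
    have ht₀Icc : t₀ ∈ Set.Icc (0:ℝ) 1 := ht₀B'.1
    have ht₀ne : l₀.extend t₀ ≠ w := by
      intro hcon
      rw [hcon, dist_self] at ht₀dist
      linarith
    obtain ⟨hat₀, hnt₀⟩ := hB t₀ ht₀dist
    -- the set of w-times
    set S : Set ℝ := {s : ℝ | s ∈ Set.Icc (0:ℝ) 1 ∧ l₀.extend s = w} with hSdef
    have hSclosed : IsClosed S :=
      IsClosed.inter isClosed_Icc (isClosed_eq l₀.continuous_extend continuous_const)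
    have hSmem : ∀ s : ℝ, s ∈ Set.Icc (0:ℝ) 1 → l₀.extend s = w → s ∈ S := by
      intro s h1 h2
      rw [hSdef]
      exact ⟨h1, h2⟩
    have hSmem' : ∀ s : ℝ, s ∈ S → s ∈ Set.Icc (0:ℝ) 1 ∧ l₀.extend s = w := by
      intro s hsmem
      rw [hSdef] at hsmem
      exact hsmem
    have h0S : (0:ℝ) ∈ S := hSmem 0 (Set.left_mem_Icc.mpr zero_le_one) (Path.extend_zero _)
    have h1S : (1:ℝ) ∈ S := hSmem 1 (Set.right_mem_Icc.mpr zero_le_one) (Path.extend_one _)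
    set p : ℝ := sSup (S ∩ Set.Iic t₀) with hpdef
    set q : ℝ := sInf (S ∩ Set.Ici t₀) with hqdef
    have hpmem : p ∈ S ∩ Set.Iic t₀ := by
      apply IsClosed.csSup_mem (hSclosed.inter isClosed_Iic)
      · exact ⟨0, h0S, ht₀Icc.1⟩
      · exact ⟨t₀, fun z hz => hz.2⟩
    have hqmem : q ∈ S ∩ Set.Ici t₀ := by
      apply IsClosed.csInf_mem (hSclosed.inter isClosed_Ici)
      · exact ⟨1, h1S, ht₀Icc.2⟩
      · exact ⟨t₀, fun z hz => hz.2⟩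
    have hp' : l₀.extend p = w := (hSmem' p hpmem.1).2
    have hq' : l₀.extend q = w := (hSmem' q hqmem.1).2
    have hpt₀ : p < t₀ := by
      rcases lt_or_eq_of_le (Set.mem_Iic.mp hpmem.2) with h | h
      · exact h
      · exfalso; rw [h] at hp'; exact ht₀ne hp'
    have ht₀q : t₀ < q := by
      rcases lt_or_eq_of_le (Set.mem_Ici.mp hqmem.2) with h | h
      · exact h
      · exfalso; rw [← h] at hq'; exact ht₀ne hq'
    have h0p : (0:ℝ) ≤ p := (hSmem' p hpmem.1).1.1
    have hq1 : q ≤ 1 := (hSmem' q hqmem.1).1.2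
    have hpq : p ≤ q := le_of_lt (lt_trans hpt₀ ht₀q)
    -- no w-values strictly between p and q
    have hno : ∀ s : ℝ, p < s → s < q → l₀.extend s ≠ w := by
      intro s hps hsq hcon
      have hsIcc : s ∈ Set.Icc (0:ℝ) 1 := ⟨le_trans h0p hps.le, le_trans hsq.le hq1⟩
      rcases le_total s t₀ with h | h
      · have : s ≤ p := le_csSup ⟨t₀, fun z hz => hz.2⟩ ⟨hSmem s hsIcc hcon, h⟩
        linarith
      · have : q ≤ s := csInf_le ⟨t₀, fun z hz => hz.2⟩ ⟨hSmem s hsIcc hcon, h⟩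
        linarith
    -- the gap estimate
    have hgap : t₀ + δ ≤ q := by
      by_contra hcon
      push_neg at hcon
      have hd : dist t₀ q < δ := by
        rw [Real.dist_eq, abs_of_nonpos (by linarith)]
        linarith
      have h1 := hmod t₀ q hd
      rw [← hagree t₀ hat₀, ← hagree q (le_trans hat₀ (le_of_lt ht₀q))] at h1
      rw [hq'] at h1
      linarith
    -- the factor the excursion lives in
    obtain ⟨m₀, y₀, hy₀⟩ := D.hsurj (l₀.extend t₀)
    have hrange := D.excursion_range hno hpt₀ ht₀q (⟨y₀, hy₀⟩ : l₀.extend t₀ ∈ Set.range (φ m₀))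
    have hm₀M : m₀ < M := by
      have h1 : ε ≤ (2:ℝ)⁻¹ ^ m₀ := by
        have := D.dist_w_le m₀ y₀
        rw [hy₀] at this
        linarith
      have h2 : (2:ℝ)⁻¹ ^ M < (2:ℝ)⁻¹ ^ m₀ := lt_of_lt_of_le hM h1
      by_contra hcon
      push_neg at hcon
      have := pow_le_pow_of_le_one (by norm_num : (0:ℝ) ≤ 2⁻¹) (by norm_num : (2:ℝ)⁻¹ ≤ 1) hcon
      linarith
    -- the cut loop and the excursion loop
    set l₁ : Path w w := cutLoop l₀ p q hpq hp' hq' with hl₁def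
    set E : Path w w := piece l₀ p q hp' hq' with hEdef
    have hE : ∀ t : unitInterval, E t = w ∨ E t ∈ Set.range (φ m₀) := by
      intro t
      rw [hEdef, piece_apply]
      set s : ℝ := p + (t:ℝ) * (q - p) with hs
      have hs1 : p ≤ s := by nlinarith [t.2.1, t.2.2]
      have hs2 : s ≤ q := by nlinarith [t.2.1, t.2.2]
      rcases eq_or_lt_of_le hs1 with h1 | h1
      · left; rw [← h1]; exact hp'
      rcases eq_or_lt_of_le hs2 with h2 | h2
      · left; rw [h2]; exact hq'
      · right; exact hrange s h1 h2
    have hFE_self : loopMap (D.pns m₀) (D.pns_continuous m₀) (D.pns_w m₀) E = E := by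
      apply Path.ext
      funext t
      show D.pns m₀ (E t) = E t
      rcases hE t with h | h
      · rw [h, D.pns_w]
      · exact D.pns_of_mem_range h
    have hFE_ne : ∀ m : ℕ, m ≠ m₀ →
        loopMap (D.pns m) (D.pns_continuous m) (D.pns_w m) E = Path.refl w := by
      intro m hm
      apply Path.ext
      funext t
      show D.pns m (E t) = w
      rcases hE t with h | h
      · rw [h, D.pns_w]
      · exact D.pns_of_mem_range_ne (Ne.symm hm) h
    -- extend conditions for the projected loops
    have hFp : ∀ m : ℕ, (D.F m l₀).extend p = w := by
      intro m; rw [D.F_extend, hp', D.pns_w]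
    have hFq : ∀ m : ℕ, (D.F m l₀).extend q = w := by
      intro m; rw [D.F_extend, hq', D.pns_w]
    -- the per-factor splitting
    have hsplit_m : ∀ m : ℕ, m < M →
        qcl H (D.F m l₀) = qcl H (D.F m l₁) * (if m = m₀ then qcl H E else 1) := by
      intro m _
      have h1 := q_split hcomm (D.F m l₀) h0p hpq hq1 (hFp m) (hFq m)
      have h2 : cutLoop (D.F m l₀) p q hpq (hFp m) (hFq m) = D.F m l₁ :=
        (loopMap_cutLoop (D.pns m) (D.pns_continuous m) (D.pns_w m)
          l₀ hpq hp' hq' (hFp m) (hFq m)).symm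
      have h3 : piece (D.F m l₀) p q (hFp m) (hFq m)
          = loopMap (D.pns m) (D.pns_continuous m) (D.pns_w m) E :=
        (loopMap_piece (D.pns m) (D.pns_continuous m) (D.pns_w m) l₀ hp' hq'
          (hFp m) (hFq m)).symm
      rw [h1, h2, h3]
      by_cases hmm : m = m₀
      · subst hmm
        rw [if_pos rfl, hFE_self]
      · rw [if_neg hmm, hFE_ne m hmm, qcl_refl]
    have hqprod : qprod (fun m => qcl H (D.F m l₀)) M
        = qprod (fun m => qcl H (D.F m l₁)) M * qcl H E :=
      qprod_mul_single comm hm₀M hsplit_m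
    -- apply the induction hypothesis to the cut loop
    have hl₁agree : ∀ s : ℝ, q ≤ s → l₁.extend s = l.extend s := by
      intro s hqs
      rcases le_or_gt s 1 with hs1 | hs1
      · have hsIcc : s ∈ Set.Icc (0:ℝ) 1 := ⟨le_trans (le_trans h0p hpq) hqs, hs1⟩
        rw [hl₁def, cutLoop_extend l₀ hpq hp' hq' hsIcc]
        have hps : ¬ (s ≤ p) := by
          push_neg
          exact lt_of_lt_of_le (lt_trans hpt₀ ht₀q) hqs
        rw [if_neg hps]
        by_cases hsq : s ≤ q
        · have hseq : s = q := le_antisymm hsq hqs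
          rw [if_pos hsq, hseq, ← hagree q (le_trans hat₀ ht₀q.le), hq']
        · rw [if_neg hsq]
          exact hagree s (le_trans hat₀ (le_trans ht₀q.le hqs))
      · rw [Path.extend_of_one_le l₁ hs1.le, Path.extend_of_one_le l hs1.le]
    have hl₁B : ∀ s : ℝ, ε ≤ dist (l₁.extend s) w → q ≤ s ∧ 1 - (n:ℝ)*δ ≤ s := by
      intro s hbig
      have hsIcc : s ∈ Set.Icc (0:ℝ) 1 := by
        constructor
        · by_contra hc
          push_neg at hc
          rw [Path.extend_of_le_zero _ hc.le, dist_self] at hbig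
          linarith
        · by_contra hc
          push_neg at hc
          rw [Path.extend_of_one_le _ hc.le, dist_self] at hbig
          linarith
      rw [hl₁def, cutLoop_extend l₀ hpq hp' hq' hsIcc] at hbig
      by_cases hsp : s ≤ p
      · exfalso
        rw [if_pos hsp] at hbig
        have hsB : s ∈ B := hBmem s hsIcc hbig
        have := ht₀lb hsB
        linarith
      rw [if_neg hsp] at hbig
      by_cases hsq : s ≤ q
      · exfalso
        rw [if_pos hsq, dist_self] at hbig
        linarith
      push_neg at hsq
      rw [if_neg (not_le.mpr hsq)] at hbig
      have hsB : s ∈ B := hBmem s hsIcc hbig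
      constructor
      · exact hsq.le
      · push_cast at hnt₀ ⊢
        linarith
    obtain ⟨c, hcsmall, hceq⟩ := ih l₁ q hl₁agree hl₁B
    refine ⟨c, hcsmall, ?_⟩
    have hsplit₀ := q_split hcomm l₀ h0p hpq hq1 hp' hq'
    rw [← hl₁def, ← hEdef] at hsplit₀
    rw [hsplit₀, hceq, hqprod]
    rw [mul_assoc, mul_assoc]
    congr 1
    rw [comm (qcl H E) (qcl H c)]

end Master

end Stmt18Aux
namespace Stmt18Aux

section Kernel

open CategoryTheory unitInterval Filter Topology

theorem loopMap_loopMap {Y : Type*} [TopologicalSpace Y] {Z : Type*} [TopologicalSpace Z]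
    {V : Type*} [TopologicalSpace V] {y : Y} {z : Z} {v : V}
    (f : Z → V) (hf : Continuous f) (hfz : f z = v)
    (g : Y → Z) (hg : Continuous g) (hgy : g y = z) (l : Path y y) :
    loopMap f hf hfz (loopMap g hg hgy l)
      = loopMap (f ∘ g) (hf.comp hg) (by rw [Function.comp_apply, hgy, hfz]) l :=
  Path.ext rfl

theorem indHom_indHom {Y : Type*} [TopologicalSpace Y] {Z : Type*} [TopologicalSpace Z]
    {V : Type*} [TopologicalSpace V] {y : Y} {z : Z} {v : V}
    (f : Z → V) (hf : Continuous f) (hfz : f z = v)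
    (g : Y → Z) (hg : Continuous g) (hgy : g y = z) (a : FundamentalGroup Y y) :
    indHom f hf hfz (indHom g hg hgy a)
      = indHom (f ∘ g) (hf.comp hg) (by rw [Function.comp_apply, hgy, hfz]) a := by
  obtain ⟨l, rfl⟩ := pathClass_surjective a
  rw [indHom_pathClass, indHom_pathClass, indHom_pathClass, loopMap_loopMap]

variable {X : ℕ → Type} [∀ n, MetricSpace (X n)] {x : ∀ n, X n}
  {W : Type} [MetricSpace W] {w : W} {φ : ∀ n, X n → W}
  (D : WedgeData X x W w φ)

include D

theorem WedgeData.ker_le (g : FundamentalGroup W w)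
    (hg : ∀ n, indHom (D.r n) (D.r_continuous n) (D.r_w n) g ∈ strongCommutator (X n) (x n)) :
    g ∈ strongCommutator W w := by
  rw [strongCommutator, Subgroup.mem_iInf]
  intro H
  rw [Subgroup.mem_iInf]
  intro hH
  haveI : H.Normal := normal_of_commutator_le hH.1
  obtain ⟨l, hl⟩ := pathClass_surjective g
  -- each projected loop lies in H
  have hFm : ∀ m : ℕ, pathClass (D.F m l) ∈ H := by
    intro m
    have h1 : pathClass (D.F m l) = indHom (D.pns m) (D.pns_continuous m) (D.pns_w m)
        (pathClass l) := (indHom_pathClass _ _ _ _).symm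
    have h2 : indHom (D.pns m) (D.pns_continuous m) (D.pns_w m) (pathClass l)
        = indHom (φ m) (D.phi_continuous m) (D.hbase m)
          (indHom (D.r m) (D.r_continuous m) (D.r_w m) (pathClass l)) := by
      rw [indHom_indHom]
      rfl
    rw [h1, h2, hl]
    have h3 : strongCommutator (X m) (x m)
        ≤ H.comap (indHom (φ m) (D.phi_continuous m) (D.hbase m)) :=
      strongCommutator_le (qual_comap (φ m) (D.phi_continuous m) (D.hbase m) hH)
    exact h3 (hg m)
  -- the approximating small loops
  have hstep : ∀ j : ℕ, ∃ c : Path w w, (∀ t, dist (c t) w ≤ (2:ℝ)⁻¹ ^ j) ∧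
      qcl H l = qcl H c := by
    intro j
    obtain ⟨c, hcs, hceq⟩ := D.main_split hH.1 (ε := (2:ℝ)⁻¹ ^ j)
      (by positivity) (M := j + 1)
      (by
        apply pow_lt_pow_right_of_lt_one₀ (by norm_num) (by norm_num)
        omega) l
    refine ⟨c, hcs, ?_⟩
    rw [hceq]
    have h1 : qprod (fun m => qcl H (D.F m l)) (j+1) = 1 := by
      rw [qprod_congr (fun m _ => ?_), qprod_one]
      show qcl H (D.F m l) = 1
      rw [qcl, QuotientGroup.eq_one_iff]
      exact hFm m
    rw [h1, one_mul]
  choose c hcsmall hceq using hstep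
  -- the loops l⁻¹ * c j, lying in the loop set of H
  have hmem : ∀ j : ℕ, (l.symm.trans (c j)) ∈ loopSet H := by
    intro j
    have h1 : (pathClass l)⁻¹ * pathClass (c j) ∈ H := by
      rw [← QuotientGroup.eq]
      exact hceq j
    have h2 := (‹H.Normal›).conj_mem _ h1 (pathClass l)
    have h3 : pathClass l * ((pathClass l)⁻¹ * pathClass (c j)) * (pathClass l)⁻¹
        = pathClass (c j) * (pathClass l)⁻¹ := by group
    rw [h3] at h2
    show pathClass (l.symm.trans (c j)) ∈ H
    rw [pathClass_trans, pathClass_symm]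
    exact h2
  -- the limit loop
  set hinf : Path w w := l.symm.trans (Path.refl w) with hinfdef
  have htend : Tendsto (fun j => l.symm.trans (c j)) atTop (𝓝 hinf) := by
    rw [nhds_induced ((↑) : Path w w → C(unitInterval, W)), tendsto_comap_iff]
    rw [ContinuousMap.tendsto_iff_tendstoUniformly]
    rw [Metric.tendstoUniformly_iff]
    intro ε hε
    obtain ⟨N, hN⟩ := exists_pow_lt_of_lt_one hε (by norm_num : (2:ℝ)⁻¹ < 1)
    rw [eventually_atTop]
    refine ⟨N, fun j hj t => ?_⟩
    have hjN : (2:ℝ)⁻¹ ^ j ≤ (2:ℝ)⁻¹ ^ N :=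
      pow_le_pow_of_le_one (by norm_num) (by norm_num) hj
    show dist (hinf t) ((l.symm.trans (c j)) t) < ε
    rw [hinfdef, Path.trans_apply, Path.trans_apply]
    split_ifs
    · rw [dist_self]; exact lt_of_le_of_lt (by norm_num) hN |>.trans_le le_rfl |>.trans_le le_rfl
    · rw [Path.refl_apply, dist_comm]
      exact lt_of_le_of_lt (le_trans (hcsmall j _) hjN) hN
  have hlim : hinf ∈ loopSet H :=
    hH.2.mem_of_tendsto htend (Filter.Eventually.of_forall hmem)
  have h4 : pathClass hinf = (pathClass l)⁻¹ := by
    rw [hinfdef, pathClass_trans, pathClass_refl, pathClass_symm, one_mul]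
  have h5 : (pathClass l)⁻¹ ∈ H := by
    rw [← h4]; exact hlim
  rw [← hl]
  exact (Subgroup.inv_mem_iff H).mp h5

end Kernel

end Stmt18Aux
namespace Stmt18Aux

section Concat

open unitInterval Filter Topology

variable {W : Type*} [MetricSpace W] {w : W}

/-- finite concatenation of a sequence of loops, `n`-th loop on `[1-2⁻ⁿ, 1-2⁻ⁿ⁻¹]` -/
noncomputable def tconcat : (ℕ → Path w w) → ℕ → Path w w
  | _, 0 => Path.refl w
  | g, (j+1) => (g 0).trans (tconcat (fun n => g (n+1)) j)

theorem tconcat_dist_w : ∀ (j : ℕ) (g : ℕ → Path w w) (K : ℝ), 0 ≤ K →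
    (∀ n t, dist (g n t) w ≤ K * (2:ℝ)⁻¹^n) → ∀ t, dist (tconcat g j t) w ≤ K := by
  intro j
  induction j with
  | zero =>
    intro g K hK _ t
    rw [tconcat, Path.refl_apply, dist_self]
    exact hK
  | succ j ih =>
    intro g K hK hg t
    rw [tconcat, Path.trans_apply]
    split_ifs
    · refine le_trans (hg 0 _) ?_
      rw [pow_zero, mul_one]
    · have hg' : ∀ n t, dist (g (n+1) t) w ≤ (K/2) * (2:ℝ)⁻¹^n := by
        intro n t
        have := hg (n+1) t
        rw [pow_succ] at this
        calc dist (g (n+1) t) w ≤ K * ((2:ℝ)⁻¹^n * 2⁻¹) := this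
        _ = (K/2) * (2:ℝ)⁻¹^n := by ring
      calc dist (tconcat (fun n => g (n+1)) j _) w ≤ K/2 := ih _ (K/2) (by linarith) hg' _
      _ ≤ K := by linarith

theorem tconcat_cauchy : ∀ (j k : ℕ) (g : ℕ → Path w w) (K : ℝ), 0 ≤ K → j ≤ k →
    (∀ n t, dist (g n t) w ≤ K * (2:ℝ)⁻¹^n) →
    ∀ t, dist (tconcat g j t) (tconcat g k t) ≤ K * (2:ℝ)⁻¹^j := by
  intro j
  induction j with
  | zero =>
    intro k g K hK _ hg t
    rw [tconcat, Path.refl_apply, dist_comm, pow_zero, mul_one]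
    exact tconcat_dist_w k g K hK hg t
  | succ j ih =>
    intro k g K hK hjk hg t
    obtain ⟨k', rfl⟩ : ∃ k', k = k' + 1 := ⟨k - 1, by omega⟩
    rw [tconcat, tconcat, Path.trans_apply, Path.trans_apply]
    split_ifs
    · rw [dist_self]
      positivity
    · have hg' : ∀ n t, dist (g (n+1) t) w ≤ (K/2) * (2:ℝ)⁻¹^n := by
        intro n t
        have := hg (n+1) t
        rw [pow_succ] at this
        calc dist (g (n+1) t) w ≤ K * ((2:ℝ)⁻¹^n * 2⁻¹) := this
        _ = (K/2) * (2:ℝ)⁻¹^n := by ring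
      calc dist (tconcat (fun n => g (n+1)) j _) (tconcat (fun n => g (n+1)) k' _)
          ≤ (K/2) * (2:ℝ)⁻¹^j := ih k' _ (K/2) (by linarith) (by omega) hg' _
      _ = K * (2:ℝ)⁻¹^(j+1) := by rw [pow_succ]; ring

theorem tconcat_stable : ∀ (j k : ℕ) (g : ℕ → Path w w), j ≤ k →
    ∀ t : unitInterval, (t:ℝ) ≤ 1 - (2:ℝ)⁻¹^j → tconcat g k t = tconcat g j t := by
  intro j
  induction j with
  | zero =>
    intro k g _ t ht
    have ht' : (t:ℝ) = 0 := le_antisymm (by simpa using ht) t.2.1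
    have hteq : t = (0 : unitInterval) := Subtype.ext ht'
    rw [hteq, (tconcat g k).source, (tconcat g 0).source]
  | succ j ih =>
    intro k g hjk t ht
    obtain ⟨k', rfl⟩ : ∃ k', k = k' + 1 := ⟨k - 1, by omega⟩
    rw [tconcat, tconcat, Path.trans_apply, Path.trans_apply]
    split_ifs
    · rfl
    · apply ih k' _ (by omega)
      show 2 * (t:ℝ) - 1 ≤ 1 - (2:ℝ)⁻¹^j
      have h2 : (2:ℝ)⁻¹^(j+1) * 2 = (2:ℝ)⁻¹^j := by rw [pow_succ]; ring
      nlinarith [ht]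

/-- the parameter within the `m`-th block -/
noncomputable def blockParam (m : ℕ) (s : ℝ) : ℝ := (2:ℝ)^(m+1) * (s - (1 - (2:ℝ)⁻¹^m))

theorem blockParam_mem {m : ℕ} {s : ℝ} (h1 : 1 - (2:ℝ)⁻¹^m ≤ s)
    (h2 : s ≤ 1 - (2:ℝ)⁻¹^(m+1)) : blockParam m s ∈ unitInterval := by
  have hpow : (2:ℝ)^(m+1) * (2:ℝ)⁻¹^(m+1) = 1 := by rw [← mul_pow]; norm_num
  have h2m : (2:ℝ)⁻¹^m - (2:ℝ)⁻¹^(m+1) = (2:ℝ)⁻¹^(m+1) := by rw [pow_succ]; ring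
  have hp2 : (0:ℝ) < 2^(m+1) := pow_pos (by norm_num) _
  constructor
  · exact mul_nonneg hp2.le (by linarith)
  · have hle : s - (1 - (2:ℝ)⁻¹^m) ≤ (2:ℝ)⁻¹^(m+1) := by linarith
    calc (2:ℝ)^(m+1) * (s - (1 - (2:ℝ)⁻¹^m)) ≤ (2:ℝ)^(m+1) * (2:ℝ)⁻¹^(m+1) :=
        mul_le_mul_of_nonneg_left hle hp2.le
    _ = 1 := hpow

theorem tconcat_block : ∀ (m j : ℕ) (g : ℕ → Path w w), m < j →
    ∀ (t : unitInterval) (h1 : 1 - (2:ℝ)⁻¹^m ≤ (t:ℝ)) (h2 : (t:ℝ) ≤ 1 - (2:ℝ)⁻¹^(m+1)),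
    tconcat g j t = g m ⟨blockParam m (t:ℝ), blockParam_mem h1 h2⟩ := by
  intro m
  induction m with
  | zero =>
    intro j g hj t h1 h2
    obtain ⟨j', rfl⟩ : ∃ j', j = j' + 1 := ⟨j - 1, by omega⟩
    have ht : (t:ℝ) ≤ 1/2 := by
      have : (2:ℝ)⁻¹^(0+1) = 1/2 := by norm_num
      linarith [h2, this.symm.le]
    rw [tconcat, Path.trans_apply, dif_pos ht]
    congr 1
    apply Subtype.ext
    show 2 * (t:ℝ) = blockParam 0 (t:ℝ)
    rw [blockParam]
    norm_num
  | succ m ih =>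
    intro j g hj t h1 h2
    obtain ⟨j', rfl⟩ : ∃ j', j = j' + 1 := ⟨j - 1, by omega⟩
    have hpow : (2:ℝ)⁻¹^(m+1) ≤ 2⁻¹ := by
      calc (2:ℝ)⁻¹^(m+1) ≤ (2:ℝ)⁻¹^1 :=
        pow_le_pow_of_le_one (by norm_num) (by norm_num) (by omega)
      _ = 2⁻¹ := pow_one _
    have ht : 1/2 ≤ (t:ℝ) := by
      have := h1
      have h' : (1:ℝ) - 2⁻¹^(m+1) ≥ 1 - 2⁻¹ := by linarith
      linarith [h']
    rw [tconcat, Path.trans_apply]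
    rcases eq_or_lt_of_le ht with heq | hlt
    · -- t = 1/2 : both sides are w
      rw [dif_pos heq.symm.le]
      have h20 : g 0 ⟨2 * (t:ℝ),
          by constructor <;> [linarith [t.2.1]; linarith [heq]]⟩ = w := by
        have harg : (⟨2 * (t:ℝ),
            by constructor <;> [linarith [t.2.1]; linarith [heq]]⟩ : unitInterval)
            = (1:unitInterval) := by
          apply Subtype.ext; show 2 * (t:ℝ) = 1; linarith [heq]
        rw [harg, (g 0).target]
      rw [h20]
      -- RHS : blockParam (m+1) t = 0 since t = 1 - 2⁻¹^(m+1)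
      have hbm : 1 - (2:ℝ)⁻¹^(m+1) ≤ (t:ℝ) := h1
      have hbm2 : (t:ℝ) = 1 - (2:ℝ)⁻¹^(m+1) := by
        -- from heq : 1/2 = t and h1 : 1 - 2⁻¹^(m+1) ≤ t ≤ 1 - 2⁻¹^(m+2)
        have hm0 : (2:ℝ)⁻¹^(m+1) ≥ 1/2 := by linarith [h1, heq]
        have hm0' : (2:ℝ)⁻¹^(m+1) ≤ 1/2 := by
          calc (2:ℝ)⁻¹^(m+1) ≤ (2:ℝ)⁻¹^1 :=
            pow_le_pow_of_le_one (by norm_num) (by norm_num) (by omega)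
          _ = 1/2 := by norm_num
        rw [← heq]
        linarith
      have hrhs : (⟨blockParam (m+1) (t:ℝ), blockParam_mem h1 h2⟩ : unitInterval)
          = (0 : unitInterval) := by
        apply Subtype.ext
        show blockParam (m+1) (t:ℝ) = 0
        rw [blockParam, hbm2]
        ring
      rw [hrhs, (g (m+1)).source]
    · rw [dif_neg (by push_neg; linarith : ¬ (t:ℝ) ≤ 1/2)]
      have h1' : 1 - (2:ℝ)⁻¹^m ≤ 2 * (t:ℝ) - 1 := by
        have : (2:ℝ)⁻¹^(m+1) * 2 = (2:ℝ)⁻¹^m := by rw [pow_succ]; ring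
        nlinarith [h1]
      have h2' : 2 * (t:ℝ) - 1 ≤ 1 - (2:ℝ)⁻¹^(m+1) := by
        have : (2:ℝ)⁻¹^(m+2) * 2 = (2:ℝ)⁻¹^(m+1) := by rw [pow_succ]; ring
        nlinarith [h2]
      have := ih j' (fun n => g (n+1)) (by omega)
        ⟨2 * (t:ℝ) - 1, by constructor <;> nlinarith [t.2.1, t.2.2]⟩ h1' h2'
      rw [this]
      congr 1
      apply Subtype.ext
      show blockParam m (2 * (t:ℝ) - 1) = blockParam (m+1) (t:ℝ)
      rw [blockParam, blockParam, pow_succ (2:ℝ) (m+1), pow_succ (2:ℝ)⁻¹ m]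
      ring

end Concat

end Stmt18Aux
namespace Stmt18Aux

section InfConcat

open unitInterval Filter Topology

variable {W : Type*} [MetricSpace W] {w : W}

theorem exists_block_index {t : ℝ} (ht : t < 1) : ∃ j : ℕ, t ≤ 1 - (2:ℝ)⁻¹^j := by
  obtain ⟨j, hj⟩ := exists_pow_lt_of_lt_one (by linarith : (0:ℝ) < 1 - t)
    (by norm_num : (2:ℝ)⁻¹ < 1)
  exact ⟨j, by linarith⟩

open Classical in
/-- the first index `j` with `t ≤ 1 - 2⁻ʲ` -/
noncomputable def blockIndex {t : ℝ} (h : t < 1) : ℕ :=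
  Nat.find (exists_block_index h)

open Classical in
theorem blockIndex_spec {t : ℝ} (h : t < 1) : t ≤ 1 - (2:ℝ)⁻¹^(blockIndex h) :=
  Nat.find_spec (exists_block_index h)

noncomputable def infConcatFun (g : ℕ → Path w w) (t : unitInterval) : W :=
  if h : (t:ℝ) < 1 then tconcat g (blockIndex h) t else w

theorem infConcatFun_eq (g : ℕ → Path w w) {t : unitInterval} (h : (t:ℝ) < 1) {k : ℕ}
    (hk : (t:ℝ) ≤ 1 - (2:ℝ)⁻¹^k) : infConcatFun g t = tconcat g k t := by
  rw [infConcatFun, dif_pos h]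
  have hj₀ : (t:ℝ) ≤ 1 - (2:ℝ)⁻¹^(blockIndex h) := blockIndex_spec h
  have e1 := tconcat_stable (blockIndex h)
    (max (blockIndex h) k) g (le_max_left _ _) t hj₀
  have e2 := tconcat_stable k (max (blockIndex h) k) g
    (le_max_right _ _) t hk
  rw [← e1, e2]

theorem infConcatFun_dist (g : ℕ → Path w w) (hg : ∀ n t, dist (g n t) w ≤ (2:ℝ)⁻¹^n)
    (j : ℕ) (t : unitInterval) :
    dist (tconcat g j t) (infConcatFun g t) ≤ (2:ℝ)⁻¹^j := by
  have hg1 : ∀ n t, dist (g n t) w ≤ 1 * (2:ℝ)⁻¹^n := by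
    intro n t; rw [one_mul]; exact hg n t
  by_cases h : (t:ℝ) < 1
  · obtain ⟨kt, hkt⟩ := exists_block_index h
    have hk : (t:ℝ) ≤ 1 - (2:ℝ)⁻¹^(max j kt) := by
      have : (2:ℝ)⁻¹^(max j kt) ≤ (2:ℝ)⁻¹^kt :=
        pow_le_pow_of_le_one (by norm_num) (by norm_num) (le_max_right _ _)
      linarith
    rw [infConcatFun_eq g h hk]
    have := tconcat_cauchy j (max j kt) g 1 zero_le_one (le_max_left _ _) hg1 t
    rw [one_mul] at this
    exact this
  · have ht1 : t = (1:unitInterval) := Subtype.ext (le_antisymm t.2.2 (not_lt.mp h))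
    rw [infConcatFun, dif_neg h, ht1, (tconcat g j).target, dist_self]
    positivity

noncomputable def infConcat (g : ℕ → Path w w) (hg : ∀ n t, dist (g n t) w ≤ (2:ℝ)⁻¹^n) :
    Path w w where
  toFun := infConcatFun g
  continuous_toFun := by
    have huc : TendstoUniformly (fun j t => tconcat g j t) (infConcatFun g) atTop := by
      rw [Metric.tendstoUniformly_iff]
      intro ε hε
      obtain ⟨N, hN⟩ := exists_pow_lt_of_lt_one hε (by norm_num : (2:ℝ)⁻¹ < 1)
      rw [eventually_atTop]
      refine ⟨N, fun j hj t => ?_⟩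
      rw [dist_comm]
      calc dist (tconcat g j t) (infConcatFun g t) ≤ (2:ℝ)⁻¹^j := infConcatFun_dist g hg j t
      _ ≤ (2:ℝ)⁻¹^N := pow_le_pow_of_le_one (by norm_num) (by norm_num) hj
      _ < ε := hN
    exact huc.continuous (Frequently.of_forall fun j => (tconcat g j).continuous)
  source' := by
    have h : ((0:unitInterval):ℝ) < 1 := by rw [Set.Icc.coe_zero]; norm_num
    have hk : ((0:unitInterval):ℝ) ≤ 1 - (2:ℝ)⁻¹^0 := by rw [Set.Icc.coe_zero]; norm_num
    show infConcatFun g 0 = w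
    rw [infConcatFun_eq g h hk]
    exact (tconcat g 0).source
  target' := by
    have h : ¬ ((1:unitInterval):ℝ) < 1 := by rw [Set.Icc.coe_one]; norm_num
    show infConcatFun g 1 = w
    rw [infConcatFun, dif_neg h]

theorem infConcat_apply (g : ℕ → Path w w) (hg : ∀ n t, dist (g n t) w ≤ (2:ℝ)⁻¹^n)
    (t : unitInterval) : infConcat g hg t = infConcatFun g t := rfl

theorem infConcat_block (g : ℕ → Path w w) (hg : ∀ n t, dist (g n t) w ≤ (2:ℝ)⁻¹^n)
    (m : ℕ) (t : unitInterval) (h1 : 1 - (2:ℝ)⁻¹^m ≤ (t:ℝ))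
    (h2 : (t:ℝ) ≤ 1 - (2:ℝ)⁻¹^(m+1)) :
    infConcat g hg t = g m ⟨blockParam m (t:ℝ), blockParam_mem h1 h2⟩ := by
  have hlt : (t:ℝ) < 1 := by nlinarith [pow_pos (by norm_num : (0:ℝ) < 2⁻¹) (m+1)]
  rw [infConcat_apply, infConcatFun_eq g hlt h2]
  exact tconcat_block m (m+1) g (Nat.lt_succ_self m) t h1 h2

theorem exists_block {t : unitInterval} (h : (t:ℝ) < 1) :
    ∃ m : ℕ, 1 - (2:ℝ)⁻¹^m ≤ (t:ℝ) ∧ (t:ℝ) ≤ 1 - (2:ℝ)⁻¹^(m+1) := by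
  haveI : DecidablePred fun j : ℕ => (t:ℝ) ≤ 1 - (2:ℝ)⁻¹^(j+1) := fun _ => Classical.dec _
  have hex : ∃ j : ℕ, (t:ℝ) ≤ 1 - (2:ℝ)⁻¹^(j+1) := by
    obtain ⟨j, hj⟩ := exists_block_index h
    refine ⟨j, ?_⟩
    have : (2:ℝ)⁻¹^(j+1) ≤ (2:ℝ)⁻¹^j :=
      pow_le_pow_of_le_one (by norm_num) (by norm_num) (Nat.le_succ j)
    linarith
  set m := Nat.find hex with hmdef
  refine ⟨m, ?_, Nat.find_spec hex⟩
  match hm : m with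
  | 0 => rw [pow_zero]; simpa using t.2.1
  | (m'+1) =>
    have := Nat.find_min hex (m := m') (by omega)
    push_neg at this
    linarith

end InfConcat

end Stmt18Aux
namespace Stmt18Aux

section Surj

open unitInterval

theorem blockParam_continuous (n : ℕ) : Continuous fun s : ℝ => blockParam n s := by
  unfold blockParam
  continuity

/-- clamped block reparametrization -/
noncomputable def clampI (n : ℕ) (t : unitInterval) : unitInterval :=
  ⟨min 1 (max 0 (blockParam n (t:ℝ))), by
    constructor
    · exact le_min zero_le_one (le_max_left 0 _)
    · exact min_le_left _ _⟩

theorem clampI_continuous (n : ℕ) : Continuous (clampI n) := by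
  apply Continuous.subtype_mk
  exact (continuous_const.min (continuous_const.max
    ((blockParam_continuous n).comp continuous_subtype_val)))

theorem two_pow_inv (k : ℕ) : (2:ℝ)^(k+1) * (2:ℝ)⁻¹^k = 2 := by
  rw [pow_succ, mul_comm ((2:ℝ)^k) 2, mul_assoc, ← mul_pow]
  norm_num

theorem clampI_zero (n : ℕ) : clampI n 0 = 0 := by
  apply Subtype.ext
  show min 1 (max 0 (blockParam n ((0:unitInterval):ℝ))) = 0
  rw [Set.Icc.coe_zero]
  have hz : blockParam n 0 ≤ 0 := by
    rw [blockParam]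
    have h1 : (2:ℝ)⁻¹^n ≤ 1 := pow_le_one₀ (by norm_num) (by norm_num)
    have h2 : (0:ℝ) < 2^(n+1) := pow_pos (by norm_num) _
    nlinarith
  rw [max_eq_left hz, min_eq_right zero_le_one]

theorem clampI_one (n : ℕ) : clampI n 1 = 1 := by
  apply Subtype.ext
  show min 1 (max 0 (blockParam n ((1:unitInterval):ℝ))) = 1
  rw [Set.Icc.coe_one]
  have hz : (1:ℝ) ≤ blockParam n 1 := by
    rw [blockParam]
    have := two_pow_inv n
    nlinarith
  rw [max_eq_right (le_trans zero_le_one hz), min_eq_left hz]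

variable {X : ℕ → Type} [∀ n, MetricSpace (X n)] {x : ∀ n, X n}
  {W : Type} [MetricSpace W] {w : W} {φ : ∀ n, X n → W}
  (D : WedgeData X x W w φ)

include D

/-- the infinite concatenation of the given loops, one in each wedge factor -/
noncomputable def WedgeData.bigLoop (ls : ∀ n, Path (x n) (x n)) : Path w w :=
  infConcat (fun m => loopMap (φ m) (D.phi_continuous m) (D.hbase m) (ls m))
    (fun m t => D.dist_w_le m ((ls m) t))

theorem WedgeData.r_bigLoop (ls : ∀ n, Path (x n) (x n)) (n : ℕ) :
    loopMap (D.r n) (D.r_continuous n) (D.r_w n) (D.bigLoop ls)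
      = (ls n).reparam (clampI n) (clampI_continuous n) (clampI_zero n) (clampI_one n) := by
  apply Path.ext
  funext t
  rw [Path.coe_reparam]
  show D.r n (D.bigLoop ls t) = ls n (clampI n t)
  by_cases hlt : (t:ℝ) < 1
  · obtain ⟨m, hm1, hm2⟩ := exists_block hlt
    have hval := infConcat_block (fun m => loopMap (φ m) (D.phi_continuous m) (D.hbase m) (ls m))
      (fun m t => D.dist_w_le m ((ls m) t)) m t hm1 hm2
    have hbl : D.bigLoop ls t = φ m ((ls m) ⟨blockParam m (t:ℝ), blockParam_mem hm1 hm2⟩) := hval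
    by_cases hmn : m = n
    · subst hmn
      rw [hbl, D.r_phi_self]
      congr 1
      apply Subtype.ext
      show blockParam m (t:ℝ) = min 1 (max 0 (blockParam m (t:ℝ)))
      rw [max_eq_right (blockParam_mem hm1 hm2).1, min_eq_right (blockParam_mem hm1 hm2).2]
    · rw [hbl, D.r_phi_ne hmn]
      rcases Nat.lt_or_ge m n with h | h
      · -- m < n : the clamp is 0
        have hle : (t:ℝ) ≤ 1 - (2:ℝ)⁻¹^n := by
          have : (2:ℝ)⁻¹^n ≤ (2:ℝ)⁻¹^(m+1) :=
            pow_le_pow_of_le_one (by norm_num) (by norm_num) (by omega)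
          linarith
        have hz : blockParam n (t:ℝ) ≤ 0 := by
          rw [blockParam]
          have h2 : (0:ℝ) < 2^(n+1) := pow_pos (by norm_num) _
          nlinarith
        have hc : clampI n t = 0 := by
          apply Subtype.ext
          show min 1 (max 0 (blockParam n (t:ℝ))) = 0
          rw [max_eq_left hz, min_eq_right zero_le_one]
        rw [hc, (ls n).source]
      · -- m > n : the clamp is 1
        have hge : 1 - (2:ℝ)⁻¹^(n+1) ≤ (t:ℝ) := by
          have : (2:ℝ)⁻¹^m ≤ (2:ℝ)⁻¹^(n+1) :=
            pow_le_pow_of_le_one (by norm_num) (by norm_num) (by omega)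
          linarith
        have hz : (1:ℝ) ≤ blockParam n (t:ℝ) := by
          rw [blockParam]
          have e1 := two_pow_inv n
          have e2 : (2:ℝ)^(n+1) * (2:ℝ)⁻¹^(n+1) = 1 := by
            rw [← mul_pow]; norm_num
          have h2 : (0:ℝ) < 2^(n+1) := pow_pos (by norm_num) _
          have h3 : (2:ℝ)⁻¹^(n+1) * 2 = (2:ℝ)⁻¹^n := by rw [pow_succ]; ring
          nlinarith
        have hc : clampI n t = 1 := by
          apply Subtype.ext
          show min 1 (max 0 (blockParam n (t:ℝ))) = 1
          rw [max_eq_right (le_trans zero_le_one hz), min_eq_left hz]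
        rw [hc, (ls n).target]
  · have ht1 : t = (1:unitInterval) := Subtype.ext (le_antisymm t.2.2 (not_lt.mp hlt))
    have hb1 : D.bigLoop ls t = w := by rw [ht1]; exact (D.bigLoop ls).target
    rw [hb1, D.r_w, ht1, clampI_one, (ls n).target]

theorem WedgeData.indHom_bigLoop (ls : ∀ n, Path (x n) (x n)) (n : ℕ) :
    indHom (D.r n) (D.r_continuous n) (D.r_w n) (pathClass (D.bigLoop ls))
      = pathClass (ls n) := by
  rw [indHom_pathClass, D.r_bigLoop ls n, pathClass_reparam]

end Surj

end Stmt18Aux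
namespace Stmt18Aux

section Final

open unitInterval

variable {X : ℕ → Type} [∀ n, MetricSpace (X n)] {x : ∀ n, X n}
  {W : Type} [MetricSpace W] {w : W} {φ : ∀ n, X n → W}
  (D : WedgeData X x W w φ)

include D

/-- the homomorphism from `π₁(W)` to the product of strong abelianizations -/
noncomputable def WedgeData.Phi : FundamentalGroup W w →* ∀ n, StrongAb (X n) (x n) :=
  MonoidHom.mk' (fun g n =>
    QuotientGroup.mk (indHom (D.r n) (D.r_continuous n) (D.r_w n) g)) (by
      intro a b
      funext n
      show QuotientGroup.mk (indHom (D.r n) (D.r_continuous n) (D.r_w n) (a * b)) = _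
      rw [map_mul, QuotientGroup.mk_mul]
      rfl)

theorem WedgeData.Phi_apply (g : FundamentalGroup W w) (n : ℕ) :
    D.Phi g n = QuotientGroup.mk (indHom (D.r n) (D.r_continuous n) (D.r_w n) g) := rfl

theorem WedgeData.sc_le_ker : strongCommutator W w ≤ (D.Phi).ker := by
  intro g hg
  rw [MonoidHom.mem_ker]
  funext n
  rw [D.Phi_apply]
  show _ = (1 : StrongAb (X n) (x n))
  rw [QuotientGroup.eq_one_iff]
  exact strongCommutator_le_comap (D.r n) (D.r_continuous n) (D.r_w n) hg

theorem WedgeData.ker_le_sc : (D.Phi).ker ≤ strongCommutator W w := by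
  intro g hg
  apply D.ker_le g
  intro n
  have h1 := congrFun (MonoidHom.mem_ker.mp hg) n
  rw [D.Phi_apply] at h1
  have h2 : (1 : ∀ n, StrongAb (X n) (x n)) n = (1 : StrongAb (X n) (x n)) := rfl
  rw [h2] at h1
  exact (QuotientGroup.eq_one_iff _).mp h1

theorem WedgeData.Phi_surjective : Function.Surjective D.Phi := by
  intro gs
  have hex : ∀ n, ∃ ln : Path (x n) (x n),
      (QuotientGroup.mk (pathClass ln) : StrongAb (X n) (x n)) = gs n := by
    intro n
    obtain ⟨a, ha⟩ := QuotientGroup.mk_surjective (gs n)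
    obtain ⟨ln, hln⟩ := pathClass_surjective a
    exact ⟨ln, by rw [hln, ha]⟩
  choose ls hls using hex
  refine ⟨pathClass (D.bigLoop ls), ?_⟩
  funext n
  rw [D.Phi_apply, D.indHom_bigLoop ls n]
  exact hls n

theorem WedgeData.result : Nonempty (StrongAb W w ≃* ∀ n, StrongAb (X n) (x n)) := by
  let Φbar : StrongAb W w →* ∀ n, StrongAb (X n) (x n) :=
    QuotientGroup.lift (strongCommutator W w) D.Phi D.sc_le_ker
  have hbij : Function.Bijective Φbar := by
    constructor
    · rw [← MonoidHom.ker_eq_bot_iff, eq_bot_iff]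
      intro qg hq
      induction qg using QuotientGroup.induction_on with | _ g => ?_
      rw [MonoidHom.mem_ker] at hq
      have hker : g ∈ (D.Phi).ker := by
        rw [MonoidHom.mem_ker]
        exact hq
      have hsc := D.ker_le_sc hker
      rw [Subgroup.mem_bot]
      exact (QuotientGroup.eq_one_iff g).mpr hsc
    · intro gs
      obtain ⟨g, hgs⟩ := D.Phi_surjective gs
      exact ⟨QuotientGroup.mk g, hgs⟩
  exact ⟨MulEquiv.ofBijective Φbar hbij⟩

end Final

end Stmt18Aux

/-- Let `(Xₙ, dₙ)` be path connected metric spaces with basepoints `xₙ`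
and diameter at most `2⁻ⁿ`.  Let `W` (with point `w`) be the shrinking wedge
`⋁ˢₙ (Xₙ, xₙ)`, characterized by maps `φₙ : Xₙ → W` sending `xₙ` to `w`, jointly
surjective, and realizing the wedge metric: `d(φₙ y, φₙ z) = dₙ(y, z)` and, for `n ≠ m`,
`d(φₙ y, φₘ z) = dₙ(y, xₙ) + dₘ(z, xₘ)`.  Then the strong abelianization `ĥ(W, w)` is
isomorphic as a group to `∏ₙ ĥ(Xₙ, xₙ)`. -/
theorem stmt18 (X : ℕ → Type) [∀ n, MetricSpace (X n)] [∀ n, PathConnectedSpace (X n)]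
    (x : ∀ n, X n) (hdiam : ∀ (n : ℕ) (y z : X n), dist y z ≤ 2⁻¹ ^ n)
    (W : Type) [MetricSpace W] (w : W) (φ : ∀ n, X n → W)
    (hbase : ∀ n, φ n (x n) = w)
    (hsurj : ∀ v : W, ∃ n yy, φ n yy = v)
    (hdist_same : ∀ (n : ℕ) (y z : X n), dist (φ n y) (φ n z) = dist y z)
    (hdist_ne : ∀ (n m : ℕ), n ≠ m → ∀ (y : X n) (z : X m),
        dist (φ n y) (φ m z) = dist y (x n) + dist z (x m)) :
    Nonempty (StrongAb W w ≃* ∀ n, StrongAb (X n) (x n)) := by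
  have D : Stmt18Aux.WedgeData X x W w φ := ⟨hdiam, hbase, hsurj, hdist_same, hdist_ne⟩
  exact D.result
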